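/- arXiv:cs/0604032 — 13 statements merged into one kernel-verified Lean document; each statement's English description precedes it below -/
import Mathlib

section
/- The homomorphism from the free group on the set of all finite tuples of real numbers to F that sends the generator corresponding to a tuple r to the element w_r is injective; in other words, the family (w_r), indexed by all finite real tuples r, is a free basis of the subgroup of F that it generates. Consequently, for every set A of finite real tuples and every finite real tuple r, the element w_r lies in the subgroup of F generated by {w_s : s ∈ A} if and only if r ∈ A. -/
/-- The free group `F` on the generating set
`X = {x_{(i,s)} : i ∈ ℕ, s ∈ ℝ} ∪ {y}`. -/
abbrev F : Type := FreeGroup ((ℕ × ℝ) ⊕ Unit)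

/-- The generator `x_{(i,s)}`. -/
def xg (p : ℕ × ℝ) : F := FreeGroup.of (Sum.inl p)

/-- The generator `y`. -/
def yg : F := FreeGroup.of (Sum.inr ())

/-- The word `x_{(1,r_1)} ⋯ x_{(k,r_k)}` for a tuple `r = (r_1, …, r_k)`. -/
def cword (r : List ℝ) : F :=
  (List.zipWith (fun i a => xg (i + 1, a)) (List.range r.length) r).prod

/-- The word `w_r = x_{(k,r_k)}⁻¹ ⋯ x_{(1,r_1)}⁻¹ · y · x_{(1,r_1)} ⋯ x_{(k,r_k)}`. -/
def wword (r : List ℝ) : F := (cword r)⁻¹ * yg * cword r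

open FreeGroup SemidirectProduct
open scoped Classical

noncomputable section AuxW

/-- action of F on FreeGroup F by left multiplication on generators -/
def lact : F →* MulAut (FreeGroup F) where
  toFun m := FreeGroup.freeGroupCongr (Equiv.mulLeft m)
  map_one' := MulEquiv.toMonoidHom_injective (FreeGroup.ext_hom _ _ (by simp))
  map_mul' a b := MulEquiv.toMonoidHom_injective (FreeGroup.ext_hom _ _ (by simp [mul_assoc]))

lemma lact_of (m : F) (x : F) : lact m (FreeGroup.of x) = FreeGroup.of (m * x) := by
  simp [lact]

def Φ : F →* FreeGroup F ⋊[lact] F :=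
  FreeGroup.lift (Sum.elim (fun p => inr (xg p)) (fun _ => inl (FreeGroup.of (1 : F))))

lemma Φ_xg (p : ℕ × ℝ) : Φ (xg p) = inr (xg p) := by
  simp [Φ, xg]

lemma Φ_yg : Φ yg = inl (FreeGroup.of (1 : F)) := by
  simp [Φ, yg]

lemma Φ_cword (r : List ℝ) : Φ (cword r) = inr (cword r) := by
  unfold cword
  generalize (List.range r.length) = I
  induction I generalizing r with
  | nil => simp
  | cons i t ih =>
    cases r with
    | nil => simp
    | cons a s =>
      simp only [List.zipWith_cons_cons, List.prod_cons]
      rw [_root_.map_mul, _root_.map_mul, Φ_xg, ih s]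

lemma Φ_wword (r : List ℝ) :
    Φ (wword r) = inl (FreeGroup.of ((cword r)⁻¹)) := by
  rw [wword, _root_.map_mul, _root_.map_mul, _root_.map_inv, Φ_cword, Φ_yg,
    ← _root_.map_inv (inr : F →* FreeGroup F ⋊[lact] F),
    ← SemidirectProduct.inl_aut_inv, ← _root_.map_inv lact, lact_of, mul_one]

/-- all-true words are reduced -/
lemma reduce_all_true {α : Type} [DecidableEq α] :
    ∀ (L : List (α × Bool)), (∀ x ∈ L, x.2 = true) → FreeGroup.reduce L = L
  | [], _ => rfl
  | x :: L, h => by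
    rw [FreeGroup.reduce.cons, reduce_all_true L (fun y hy => h y (List.mem_cons_of_mem _ hy))]
    cases L with
    | nil => rfl
    | cons z t =>
      have hx : x.2 = true := h x List.mem_cons_self
      have hz : z.2 = true := h z (by simp)
      simp [hx, hz]

lemma prod_of {α : Type} :
    ∀ (L : List α), (L.map FreeGroup.of).prod = FreeGroup.mk (L.map (fun a => (a, true)))
  | [] => by simp [FreeGroup.one_eq_mk]
  | a :: t => by
    rw [List.map_cons, List.prod_cons, prod_of t, List.map_cons]
    rw [show (FreeGroup.of a : FreeGroup α) = FreeGroup.mk [(a, true)] from rfl,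
      FreeGroup.mul_mk, List.singleton_append]

def pairs (r : List ℝ) : List (ℕ × ℝ) :=
  List.zipWith (fun i a => (i + 1, a)) (List.range r.length) r

lemma zip_snd : ∀ (l : List ℝ) (l' : List ℕ), l.length ≤ l'.length →
    List.zipWith (fun (_ : ℕ) (a : ℝ) => a) l' l = l
  | [], _, _ => by simp
  | a :: t, [], h => by simp at h
  | a :: t, i :: t', h => by
    simpa using zip_snd t t' (by simpa using h)

lemma pairs_snd (r : List ℝ) : (pairs r).map Prod.snd = r := by
  rw [pairs, List.map_zipWith]
  exact zip_snd r _ (by simp)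

lemma cword_eq (r : List ℝ) :
    cword r = FreeGroup.mk (((pairs r).map Sum.inl).map (fun a => (a, true))) := by
  rw [← prod_of, List.map_map, cword, pairs, List.map_zipWith]
  rfl

lemma cword_toWord (r : List ℝ) :
    FreeGroup.toWord (cword r) = ((pairs r).map Sum.inl).map (fun a => (a, true)) := by
  rw [cword_eq, FreeGroup.toWord_mk, reduce_all_true]
  intro x hx
  simp at hx
  obtain ⟨a, b, -, rfl⟩ := hx
  rfl

lemma cword_injective : Function.Injective cword := by
  intro r s h
  have h' := congrArg FreeGroup.toWord h
  rw [cword_toWord, cword_toWord] at h'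
  have hinj : Function.Injective (fun a : (ℕ × ℝ) ⊕ Unit => ((a, true) : ((ℕ × ℝ) ⊕ Unit) × Bool)) :=
    fun a b hab => congrArg Prod.fst hab
  have hp : pairs r = pairs s :=
    List.map_injective_iff.mpr Sum.inl_injective
      (List.map_injective_iff.mpr hinj h')
  rw [← pairs_snd r, ← pairs_snd s, hp]

lemma freeGroup_map_inj {α β : Type} [Nonempty α] {f : α → β} (hf : Function.Injective f) :
    Function.Injective (FreeGroup.map f : FreeGroup α →* FreeGroup β) := by
  have hli : Function.LeftInverse (FreeGroup.map (Function.invFun f)) (FreeGroup.map f) := by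
    intro x
    rw [FreeGroup.map.comp]
    have : Function.invFun f ∘ f = id := funext (Function.leftInverse_invFun hf)
    rw [this, FreeGroup.map.id]
  exact hli.injective

lemma of_mem_closure {α : Type} {T : Set α} {a : α}
    (h : FreeGroup.of a ∈ Subgroup.closure (FreeGroup.of '' T)) : a ∈ T := by
  by_contra hx
  set χ : FreeGroup α →* Multiplicative ℤ :=
    FreeGroup.lift (fun b => if b = a then Multiplicative.ofAdd (1:ℤ) else 1) with hχ
  have h1 : Subgroup.closure (FreeGroup.of '' T) ≤ χ.ker := by
    rw [Subgroup.closure_le]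
    rintro _ ⟨t, ht, rfl⟩
    have : t ≠ a := fun h' => hx (h' ▸ ht)
    simp [hχ, MonoidHom.mem_ker, this]
  have h2 := h1 h
  simp [hχ, MonoidHom.mem_ker] at h2

end AuxW

/-- The homomorphism from the free group on all finite real tuples to `F` sending the
generator corresponding to `r` to `w_r` is injective (the `w_r` freely generate the
subgroup they generate); consequently membership of `w_r` in the subgroup generated by
`{w_s : s ∈ A}` is equivalent to `r ∈ A`. -/
theorem wword_free_and_mem_closure_iff :
    Function.Injective (FreeGroup.lift wword : FreeGroup (List ℝ) →* F) ∧
      ∀ (A : Set (List ℝ)) (r : List ℝ),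
        wword r ∈ Subgroup.closure (wword '' A) ↔ r ∈ A := by
  have hg : Function.Injective (fun r : List ℝ => (cword r)⁻¹) :=
    fun r s h => cword_injective (by simpa using congrArg (·⁻¹) h)
  have hcomp : Φ.comp (FreeGroup.lift wword) =
      (SemidirectProduct.inl : FreeGroup F →* _).comp
        (FreeGroup.map (fun r : List ℝ => (cword r)⁻¹)) := by
    apply FreeGroup.ext_hom
    intro r
    simp [Φ_wword, FreeGroup.map.of]
  constructor
  · have : Function.Injective (Φ.comp (FreeGroup.lift wword)) := by
      rw [hcomp]
      exact SemidirectProduct.inl_injective.comp (freeGroup_map_inj hg)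
    intro x y hxy
    exact this (by simp [hxy])
  · intro A r
    constructor
    · intro h
      have h1 : Φ (wword r) ∈ (Subgroup.closure (wword '' A)).map Φ :=
        Subgroup.mem_map_of_mem Φ h
      rw [MonoidHom.map_closure] at h1
      have himg : Φ '' (wword '' A) =
          (SemidirectProduct.inl : FreeGroup F →* _) ''
            (FreeGroup.of '' ((fun s : List ℝ => (cword s)⁻¹) '' A)) := by
        rw [← Set.image_comp, ← Set.image_comp, ← Set.image_comp]
        exact Set.image_congr (fun s _ => Φ_wword s)
      rw [himg, ← MonoidHom.map_closure, Φ_wword r] at h1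
      have h2 : FreeGroup.of ((cword r)⁻¹) ∈
          Subgroup.closure (FreeGroup.of '' ((fun s : List ℝ => (cword s)⁻¹) '' A)) := by
        rcases Subgroup.mem_map.mp h1 with ⟨b, hb, hb'⟩
        rwa [← SemidirectProduct.inl_injective hb']
      have h3 := of_mem_closure h2
      rcases h3 with ⟨s, hs, hs'⟩
      rwa [← hg hs']
    · intro h
      exact Subgroup.subset_closure ⟨r, h, rfl⟩
end

section
/- Let I be a nonempty index set and for each i ∈ I let S_i be a set of finite tuples of real numbers. Then the intersection over i ∈ I of the subgroups of F generated by {w_s : s ∈ S_i} equals the subgroup of F generated by {w_s : s ∈ ⋂_{i∈I} S_i}. -/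
/-! ### Auxiliary material -/

section FreeGroupLetters

set_option linter.unusedSectionVars false

variable {α : Type*} [DecidableEq α]

theorem aux_mk_mem_closure {T : Set α} :
    ∀ L : List (α × Bool), (∀ a ∈ L, a.1 ∈ T) →
      FreeGroup.mk L ∈ Subgroup.closure (FreeGroup.of '' T)
  | [], _ => by rw [← FreeGroup.one_eq_mk]; exact one_mem _
  | (a, b) :: L, h => by
    have h1 : FreeGroup.mk ((a, b) :: L) = FreeGroup.mk [(a, b)] * FreeGroup.mk L := by
      rw [FreeGroup.mul_mk]; rfl
    rw [h1]
    refine mul_mem ?_ (aux_mk_mem_closure L fun x hx => h x (List.mem_cons_of_mem _ hx))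
    have ha : a ∈ T := h (a, b) (List.mem_cons_self)
    have hofmem : FreeGroup.of a ∈ Subgroup.closure (FreeGroup.of '' T) :=
      Subgroup.subset_closure ⟨a, ha, rfl⟩
    cases b
    · have h2 : FreeGroup.mk [(a, false)] = (FreeGroup.of a)⁻¹ := by
        show FreeGroup.mk [(a, false)] = (FreeGroup.mk [(a, true)])⁻¹
        rw [FreeGroup.inv_mk]; rfl
    
      rw [h2]; exact inv_mem hofmem
    · exact hofmem

theorem aux_mem_closure_iff {T : Set α} {g : FreeGroup α} :
    g ∈ Subgroup.closure (FreeGroup.of '' T) ↔ ∀ a ∈ g.toWord, a.1 ∈ T := by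
  constructor
  · intro hg
    let H : Subgroup (FreeGroup α) :=
      { carrier := {g : FreeGroup α | ∀ a ∈ g.toWord, a.1 ∈ T}
        one_mem' := by intro a ha; simp [FreeGroup.toWord_one] at ha
        mul_mem' := by
          intro x y hx hy a ha
          have hs := (FreeGroup.toWord_mul_sublist x y).subset ha
          rcases List.mem_append.1 hs with h | h
          exacts [hx a h, hy a h]
        inv_mem' := by
          intro x hx a ha
          rw [FreeGroup.toWord_inv] at ha
          unfold FreeGroup.invRev at ha
          rw [List.mem_reverse, List.mem_map] at ha
          obtain ⟨b, hb, rfl⟩ := ha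
          exact hx b hb }
    have hle : Subgroup.closure (FreeGroup.of '' T) ≤ H := by
      rw [Subgroup.closure_le]
      rintro _ ⟨a, ha, rfl⟩ b hb
      rw [FreeGroup.toWord_of] at hb
      simp only [List.mem_singleton] at hb
      subst hb
      exact ha
    exact hle hg
  · intro h
    rw [← FreeGroup.mk_toWord (x := g)]
    exact aux_mk_mem_closure _ h

theorem aux_iInf_closure_of {I : Type*} [Nonempty I] (S : I → Set α) :
    (⨅ i, Subgroup.closure (FreeGroup.of '' S i)) =
      Subgroup.closure (FreeGroup.of '' ⋂ i, S i) := by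
  ext g
  simp only [Subgroup.mem_iInf, aux_mem_closure_iff, Set.mem_iInter]
  exact ⟨fun h a ha i => h i a ha, fun h i a ha => h a ha i⟩

theorem aux_reduce_all_true :
    ∀ L : List (α × Bool), (∀ x ∈ L, x.2 = true) → FreeGroup.reduce L = L := by
  intro L
  induction L with
  | nil => intro _; rfl
  | cons x L ih =>
    intro h
    have hL : FreeGroup.reduce L = L := ih fun y hy => h y (List.mem_cons_of_mem _ hy)
    rw [FreeGroup.reduce.cons, hL]
    cases L with
    | nil => rfl
    | cons y L' =>
      have hx : x.2 = true := h x (List.mem_cons_self)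
      have hy : y.2 = true := h y (List.mem_cons_of_mem _ (List.mem_cons_self))
      simp [hx, hy]

theorem aux_prod_of : ∀ L : List α,
    (L.map FreeGroup.of).prod = FreeGroup.mk (L.map fun a => (a, true))
  | [] => by simp [← FreeGroup.one_eq_mk]
  | a :: L => by
    have : FreeGroup.of a = FreeGroup.mk [(a, true)] := rfl
    simp only [List.map_cons, List.prod_cons, aux_prod_of L, this, FreeGroup.mul_mk]
    rfl

end FreeGroupLetters

theorem aux_map_iInf {G H : Type*} [Group G] [Group H] {f : G →* H}
    (hf : Function.Injective f) {I : Type*} [Nonempty I] (K : I → Subgroup G) :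
    Subgroup.map f (⨅ i, K i) = ⨅ i, Subgroup.map f (K i) := by
  apply le_antisymm
  · exact le_iInf fun i => Subgroup.map_mono (iInf_le K i)
  · intro x hx
    rw [Subgroup.mem_iInf] at hx
    obtain ⟨i0⟩ := ‹Nonempty I›
    obtain ⟨y, hy, rfl⟩ := hx i0
    refine ⟨y, ?_, rfl⟩
    rw [SetLike.mem_coe, Subgroup.mem_iInf]
    intro i
    obtain ⟨z, hz, hzy⟩ := hx i
    exact (hf hzy) ▸ hz

theorem aux_freeGroup_map_injective {β γ : Type*} [Nonempty β] {f : β → γ}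
    (hf : Function.Injective f) : Function.Injective (FreeGroup.map f) := by
  have hli : Function.LeftInverse (Function.invFun f) f := Function.leftInverse_invFun hf
  have hcomp : (FreeGroup.map (Function.invFun f)).comp (FreeGroup.map f) =
      MonoidHom.id (FreeGroup β) := by
    apply FreeGroup.ext_hom
    intro a
    simp [hli a]
  intro x y hxy
  have hx := DFunLike.congr_fun hcomp x
  have hy := DFunLike.congr_fun hcomp y
  simp only [MonoidHom.comp_apply, MonoidHom.id_apply] at hx hy
  rw [← hx, ← hy, hxy]

/-! ### The semidirect product representation -/

/-- `Q` is the free group on the `x`-generators. -/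
abbrev Q : Type := FreeGroup (ℕ × ℝ)

/-- `G'` is the free group on the set `Q`. -/
abbrev G' : Type := FreeGroup Q

/-- `Q` acts on `G'` by permuting the basis via right multiplication. -/
def actQ : Q →* MulAut G' where
  toFun q := FreeGroup.freeGroupCongr (Equiv.mulRight q⁻¹)
  map_one' := by
    show FreeGroup.freeGroupCongr (Equiv.mulRight ((1 : Q))⁻¹) = 1
    have h : Equiv.mulRight ((1 : Q))⁻¹ = Equiv.refl Q := by ext x; simp
    rw [h, FreeGroup.freeGroupCongr_refl]; rfl
  map_mul' a b := by
    show FreeGroup.freeGroupCongr (Equiv.mulRight (a * b)⁻¹) =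
      FreeGroup.freeGroupCongr (Equiv.mulRight a⁻¹) * FreeGroup.freeGroupCongr (Equiv.mulRight b⁻¹)
    have he : Equiv.mulRight ((a * b))⁻¹ =
        (Equiv.mulRight b⁻¹).trans (Equiv.mulRight a⁻¹) := by
      ext x; simp [mul_assoc]
    rw [he, ← FreeGroup.freeGroupCongr_trans]
    rfl

/-- The representation `Φ : F →* G' ⋊ Q`. -/
def PhiMap : F →* SemidirectProduct G' Q actQ :=
  FreeGroup.lift (Sum.elim (fun p => SemidirectProduct.inr (FreeGroup.of p))
    (fun _ => SemidirectProduct.inl (FreeGroup.of (1 : Q))))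

/-- Projection `F →* Q` killing `y`. -/
def piQ : F →* Q := FreeGroup.lift (Sum.elim FreeGroup.of fun _ => 1)

/-- The tuple of `x`-letters of `cword r`. -/
def mlist (r : List ℝ) : List (ℕ × ℝ) :=
  List.zipWith (fun i a => (i + 1, a)) (List.range r.length) r

theorem cword_eq_s1 (r : List ℝ) : cword r = ((mlist r).map xg).prod := by
  unfold cword mlist
  rw [List.map_zipWith]

/-- The element of `Q` corresponding to `cword r`. -/
def qfun (r : List ℝ) : Q := ((mlist r).map FreeGroup.of).prod

theorem phi_cword (r : List ℝ) :
    PhiMap (cword r) = SemidirectProduct.inr (qfun r) := by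
  rw [cword_eq_s1]
  rw [MonoidHom.map_list_prod]
  unfold qfun
  rw [MonoidHom.map_list_prod]
  have hpx : ∀ p : ℕ × ℝ, PhiMap (xg p) = SemidirectProduct.inr (FreeGroup.of p) := by
    intro p
    unfold PhiMap xg
    rw [FreeGroup.lift_apply_of]
    rfl
  simp only [List.map_map, Function.comp_def, hpx]

theorem actQ_inv_of (q : Q) : (actQ q)⁻¹ (FreeGroup.of (1 : Q)) = FreeGroup.of q := by
  rw [← map_inv]
  show FreeGroup.freeGroupCongr (Equiv.mulRight q⁻¹⁻¹) (FreeGroup.of (1 : Q)) = _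
  simp

theorem phi_wword (r : List ℝ) :
    PhiMap (wword r) = SemidirectProduct.inl (FreeGroup.of (qfun r)) := by
  unfold wword
  rw [map_mul, map_mul, map_inv, phi_cword]
  have hy : PhiMap yg = SemidirectProduct.inl (FreeGroup.of (1 : Q)) := by
    unfold PhiMap yg
    rw [FreeGroup.lift_apply_of]
    rfl
  rw [hy]
  rw [← actQ_inv_of (qfun r)]
  exact (SemidirectProduct.inl_aut_inv (qfun r) (FreeGroup.of (1 : Q))).symm

theorem mlist_map_snd (r : List ℝ) : (mlist r).map Prod.snd = r := by
  unfold mlist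
  have h : ∀ (l1 : List ℕ) (l : List ℝ), l.length ≤ l1.length →
      (List.zipWith (fun i a => (i + 1, a)) l1 l).map Prod.snd = l := by
    intro l1
    induction l1 with
    | nil =>
      intro l hl
      cases l with
      | nil => rfl
      | cons a l => simp at hl
    | cons i l1 ih =>
      intro l hl
      cases l with
      | nil => rfl
      | cons a l =>
        simp only [List.zipWith_cons_cons, List.map_cons]
        rw [ih l (by simpa using hl)]
  exact h _ _ (by simp)

theorem qfun_injective : Function.Injective qfun := by
  intro r r' h
  unfold qfun at h
  rw [aux_prod_of, aux_prod_of] at h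
  have h2 := congrArg FreeGroup.toWord h
  rw [FreeGroup.toWord_mk, FreeGroup.toWord_mk,
    aux_reduce_all_true _ (by simp), aux_reduce_all_true _ (by simp)] at h2
  have h3 : mlist r = mlist r' :=
    List.map_injective_iff.mpr (fun a b hab => congrArg Prod.fst hab) h2
  calc r = (mlist r).map Prod.snd := (mlist_map_snd r).symm
    _ = (mlist r').map Prod.snd := by rw [h3]
    _ = r' := mlist_map_snd r'

/-- The homomorphism sending the free group on tuples into `F` via `wword`. -/
def phiW : FreeGroup (List ℝ) →* F := FreeGroup.lift wword

theorem phiW_of (r : List ℝ) : phiW (FreeGroup.of r) = wword r := FreeGroup.lift_apply_of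

theorem phi_comp_phiW :
    PhiMap.comp phiW = SemidirectProduct.inl.comp (FreeGroup.map qfun) := by
  apply FreeGroup.ext_hom
  intro r
  simp only [MonoidHom.comp_apply, phiW_of, FreeGroup.map.of]
  exact phi_wword r

theorem phiW_injective : Function.Injective phiW := by
  have h1 : Function.Injective (PhiMap.comp phiW) := by
    rw [phi_comp_phiW, MonoidHom.coe_comp]
    exact Function.Injective.comp SemidirectProduct.inl_injective
      (aux_freeGroup_map_injective qfun_injective)
  rw [MonoidHom.coe_comp] at h1
  exact Function.Injective.of_comp h1

theorem closure_wword_eq (T : Set (List ℝ)) :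
    Subgroup.closure (wword '' T) =
      Subgroup.map phiW (Subgroup.closure (FreeGroup.of '' T)) := by
  rw [MonoidHom.map_closure, Set.image_image]
  simp only [phiW_of]

/-- For a nonempty family of sets `S i` of finite real tuples, the intersection of the
subgroups generated by `{w_s : s ∈ S i}` is the subgroup generated by
`{w_s : s ∈ ⋂ i, S i}`. -/
theorem iInf_closure_wword_eq_closure_wword_iInter
    {I : Type*} [Nonempty I] (S : I → Set (List ℝ)) :
    (⨅ i, Subgroup.closure (wword '' S i)) =
      Subgroup.closure (wword '' ⋂ i, S i) := by
  simp_rw [closure_wword_eq]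
  rw [← aux_map_iInf phiW_injective, aux_iInf_closure_of]
end

section
/- Let d ≤ D be natural numbers, let B ⊆ ℝ^D, and let A := {(s_1, …, s_d) : (s_1, …, s_D) ∈ B} ⊆ ℝ^d be the projection of B to the first d coordinates. Let H_{≤d} be the subgroup of F generated by {y} ∪ {x_{(i,s)} : 1 ≤ i ≤ d, s ∈ ℝ} and H_{>d} the subgroup generated by {x_{(i,s)} : i > d, s ∈ ℝ}. Then the subgroup of F generated by {w_r : r ∈ A} equals the intersection of the subgroup generated by {w_s : s ∈ B} ∪ H_{>d} with H_{≤d}. -/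
/-- `w_r` for a tuple `r ∈ ℝ^k` given as a function `Fin k → ℝ`. -/
def wFin {k : ℕ} (r : Fin k → ℝ) : F := wword (List.ofFn r)

def cw (n : ℕ) : List ℝ → F
  | [] => 1
  | a :: t => xg (n + 1, a) * cw (n + 1) t

lemma cw_zipWith (n : ℕ) (l : List ℝ) :
    (List.zipWith (fun i a => xg (n + i + 1, a)) (List.range l.length) l).prod = cw n l := by
  induction l generalizing n with
  | nil => simp [cw]
  | cons a t ih =>
    rw [List.length_cons, List.range_succ_eq_map, List.zipWith_cons_cons,
      List.zipWith_map_left, List.prod_cons, cw]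
    congr 1
    rw [← ih (n + 1)]
    have hf : (fun (i : ℕ) (b : ℝ) => xg (n + i.succ + 1, b)) =
        (fun (i : ℕ) (b : ℝ) => xg (n + 1 + i + 1, b)) := by
      funext i b
      congr 2
      omega
    rw [hf]

lemma cword_eq_cw (l : List ℝ) : cword l = cw 0 l := by
  rw [cword, ← cw_zipWith 0 l]
  simp only [Nat.zero_add]

def piMap (d : ℕ) : F →* F :=
  FreeGroup.lift (fun z => match z with
    | Sum.inl (i, s) => if i ≤ d then xg (i, s) else 1
    | Sum.inr _ => yg)

@[simp] lemma pi_xg (d i : ℕ) (s : ℝ) :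
    piMap d (xg (i, s)) = if i ≤ d then xg (i, s) else 1 := FreeGroup.lift_apply_of

@[simp] lemma pi_yg (d : ℕ) : piMap d yg = yg := FreeGroup.lift_apply_of

lemma pi_cw_one (d n : ℕ) (l : List ℝ) (h : d ≤ n) : piMap d (cw n l) = 1 := by
  induction l generalizing n with
  | nil => simp [cw]
  | cons a t ih =>
    rw [cw, map_mul, pi_xg, if_neg (by omega), one_mul, ih (n + 1) (by omega)]

lemma pi_cw (d n : ℕ) (l : List ℝ) : piMap d (cw n l) = cw n (l.take (d - n)) := by
  induction l generalizing n with
  | nil => simp [cw]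
  | cons a t ih =>
    by_cases h : n < d
    · rw [cw, map_mul, pi_xg, if_pos (by omega), show d - n = (d - (n+1)) + 1 by omega,
        List.take_succ_cons, cw, ih (n + 1)]
    · rw [pi_cw_one d n _ (by omega), show d - n = 0 by omega, List.take_zero, cw]

lemma cw_append (n : ℕ) (l₁ l₂ : List ℝ) :
    cw n (l₁ ++ l₂) = cw n l₁ * cw (n + l₁.length) l₂ := by
  induction l₁ generalizing n with
  | nil => simp [cw]
  | cons a t ih =>
    rw [List.cons_append, cw, cw, ih (n + 1), mul_assoc, List.length_cons,
      show n + (t.length + 1) = n + 1 + t.length from by omega]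

lemma cw_mem_low (d n : ℕ) (l : List ℝ) (h : n + l.length ≤ d) :
    cw n l ∈ Subgroup.closure
      ({yg} ∪ {g : F | ∃ (i : ℕ) (s : ℝ), 1 ≤ i ∧ i ≤ d ∧ g = xg (i, s)}) := by
  induction l generalizing n with
  | nil => exact one_mem _
  | cons a t ih =>
    refine mul_mem (Subgroup.subset_closure ?_) (ih (n + 1) (by simp at h ⊢; omega))
    exact Or.inr ⟨n + 1, a, by omega, by simp at h; omega, rfl⟩

lemma cw_mem_high (d n : ℕ) (l : List ℝ) (h : d ≤ n) :
    cw n l ∈ Subgroup.closure {g : F | ∃ (i : ℕ) (s : ℝ), d < i ∧ g = xg (i, s)} := by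
  induction l generalizing n with
  | nil => exact one_mem _
  | cons a t ih =>
    exact mul_mem (Subgroup.subset_closure ⟨n + 1, a, by omega, rfl⟩) (ih (n + 1) (by omega))

lemma ofFn_comp_castLE {d D : ℕ} (hdD : d ≤ D) (b : Fin D → ℝ) :
    List.ofFn (b ∘ Fin.castLE hdD) = (List.ofFn b).take d := by
  rw [← Fin.ofFn_take_eq_take_ofFn hdD b]
  rfl

lemma pi_wFin {d D : ℕ} (hdD : d ≤ D) (b : Fin D → ℝ) :
    piMap d (wFin b) = wFin (b ∘ Fin.castLE hdD) := by
  rw [wFin, wFin, wword, wword, cword_eq_cw, cword_eq_cw, map_mul, map_mul, map_inv,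
    pi_cw, pi_yg, Nat.sub_zero, ofFn_comp_castLE hdD]

/-- Let `d ≤ D`, `B ⊆ ℝ^D` and let `A ⊆ ℝ^d` be the projection of `B` to the first `d`
coordinates.  With `H_{≤d}` the subgroup generated by `y` and the `x_{(i,s)}` with
`1 ≤ i ≤ d`, and `H_{>d}` the subgroup generated by the `x_{(i,s)}` with `i > d`, the
subgroup generated by `{w_r : r ∈ A}` equals the intersection of the subgroup generated
by `{w_s : s ∈ B} ∪ H_{>d}` with `H_{≤d}`. -/
theorem closure_wword_proj_eq_inf
    {d D : ℕ} (hdD : d ≤ D) (B : Set (Fin D → ℝ)) :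
    Subgroup.closure (wFin '' ((fun b : Fin D → ℝ => b ∘ Fin.castLE hdD) '' B)) =
      Subgroup.closure ((wFin '' B) ∪
          (Subgroup.closure {g : F | ∃ (i : ℕ) (s : ℝ), d < i ∧ g = xg (i, s)} : Set F)) ⊓
        Subgroup.closure
          ({yg} ∪ {g : F | ∃ (i : ℕ) (s : ℝ), 1 ≤ i ∧ i ≤ d ∧ g = xg (i, s)}) := by
  have hker : Subgroup.closure {g : F | ∃ (i : ℕ) (s : ℝ), d < i ∧ g = xg (i, s)} ≤
      (piMap d).ker := by
    rw [Subgroup.closure_le]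
    rintro _ ⟨i, s, hi, rfl⟩
    simp only [SetLike.mem_coe, MonoidHom.mem_ker, pi_xg, if_neg (by omega : ¬ i ≤ d)]
  apply le_antisymm
  · rw [Subgroup.closure_le]
    rintro _ ⟨_, ⟨b, hb, rfl⟩, rfl⟩
    have hlen : ((List.ofFn b).take d).length = d := by simp [hdD]
    have hsplit : cw 0 (List.ofFn b) =
        cw 0 (List.ofFn (b ∘ Fin.castLE hdD)) * cw d ((List.ofFn b).drop d) := by
      conv_lhs => rw [← List.take_append_drop d (List.ofFn b)]
      rw [cw_append, ofFn_comp_castLE hdD, hlen, Nat.zero_add]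
    refine Subgroup.mem_inf.mpr ⟨?_, ?_⟩
    · have ht : cw d ((List.ofFn b).drop d) ∈ Subgroup.closure ((wFin '' B) ∪
          (Subgroup.closure {g : F | ∃ (i : ℕ) (s : ℝ), d < i ∧ g = xg (i, s)} : Set F)) :=
        Subgroup.subset_closure (Or.inr (cw_mem_high d d _ le_rfl))
      have hw : wFin b ∈ Subgroup.closure ((wFin '' B) ∪
          (Subgroup.closure {g : F | ∃ (i : ℕ) (s : ℝ), d < i ∧ g = xg (i, s)} : Set F)) :=
        Subgroup.subset_closure (Or.inl ⟨b, hb, rfl⟩)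
      have heq : wFin (b ∘ Fin.castLE hdD) =
          cw d ((List.ofFn b).drop d) * wFin b * (cw d ((List.ofFn b).drop d))⁻¹ := by
        rw [wFin, wFin, wword, wword, cword_eq_cw, cword_eq_cw, hsplit]
        group
      rw [heq]
      exact mul_mem (mul_mem ht hw) (inv_mem ht)
    · rw [wFin, wword, cword_eq_cw]
      have hc : cw 0 (List.ofFn (b ∘ Fin.castLE hdD)) ∈ Subgroup.closure
          ({yg} ∪ {g : F | ∃ (i : ℕ) (s : ℝ), 1 ≤ i ∧ i ≤ d ∧ g = xg (i, s)}) := by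
        apply cw_mem_low
        simp
      exact mul_mem (mul_mem (inv_mem hc) (Subgroup.subset_closure (Or.inl rfl))) hc
  · have hfixall : ∀ h ∈ Subgroup.closure
        ({yg} ∪ {g : F | ∃ (i : ℕ) (s : ℝ), 1 ≤ i ∧ i ≤ d ∧ g = xg (i, s)}),
        piMap d h = h := by
      intro h hh
      induction hh using Subgroup.closure_induction with
      | mem x hx =>
        rcases hx with h | ⟨i, s, h1, h2, rfl⟩
        · rw [Set.mem_singleton_iff] at h; subst h; exact pi_yg d
        · rw [pi_xg, if_pos h2]
      | one => exact map_one _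
      | mul x y _ _ hx hy => rw [map_mul, hx, hy]
      | inv x _ hx => rw [map_inv, hx]
    rintro g hg
    rw [Subgroup.mem_inf] at hg
    obtain ⟨hg1, hg2⟩ := hg
    have hfix : piMap d g = g := hfixall g hg2
    have hmem : piMap d g ∈ Subgroup.map (piMap d) (Subgroup.closure ((wFin '' B) ∪
        (Subgroup.closure {g : F | ∃ (i : ℕ) (s : ℝ), d < i ∧ g = xg (i, s)} : Set F))) :=
      ⟨g, hg1, rfl⟩
    rw [MonoidHom.map_closure] at hmem
    have hle : Subgroup.closure ((piMap d) '' ((wFin '' B) ∪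
        (Subgroup.closure {g : F | ∃ (i : ℕ) (s : ℝ), d < i ∧ g = xg (i, s)} : Set F))) ≤
        Subgroup.closure (wFin '' ((fun b : Fin D → ℝ => b ∘ Fin.castLE hdD) '' B)) := by
      rw [Subgroup.closure_le]
      rintro _ ⟨x, hx | hx, rfl⟩
      · obtain ⟨b, hb, rfl⟩ := hx
        rw [pi_wFin hdD]
        exact Subgroup.subset_closure ⟨_, ⟨b, hb, rfl⟩, rfl⟩
      · have : piMap d x = 1 := hker hx
        rw [this]
        exact one_mem _
    rw [← hfix]
    exact hle hmem
end

section
/- Let d : ℕ → ℕ and for each n ∈ ℕ let A_n ⊆ ℝ^{d(n)} be an arbitrary set of tuples. For a finite real tuple r set w_{n,r} := x_{(0,n)}^{-1} · w_r · x_{(0,n)} (the generator x_{(0,n)} placed outermost). Then the intersection of the subgroup of F generated by {w_{n,r} : n ∈ ℕ, r ∈ A_n} ∪ {x_{(0,n)} : n ∈ ℕ} with the subgroup of F generated by {y} ∪ {x_{(i,s)} : i ≥ 1, s ∈ ℝ} equals the subgroup of F generated by {w_r : ∃ n ∈ ℕ, r ∈ A_n}. -/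
/-- The word `w_{n,r} := x_{(0,n)}⁻¹ · w_r · x_{(0,n)}` (the generator `x_{(0,n)}`
placed outermost). -/
def wn (n : ℕ) (r : List ℝ) : F := (xg (0, (n : ℝ)))⁻¹ * wword r * xg (0, (n : ℝ))

/-- For a family `A_n ⊆ ℝ^{d(n)}` of sets of tuples, the intersection of the subgroup
generated by `{w_{n,r} : n ∈ ℕ, r ∈ A_n} ∪ {x_{(0,n)} : n ∈ ℕ}` with the subgroup
generated by `{y} ∪ {x_{(i,s)} : i ≥ 1, s ∈ ℝ}` equals the subgroup generated by
Retraction killing the generators `x_{(0,s)}`. -/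
def rhoFun : (ℕ × ℝ) ⊕ Unit → F
  | Sum.inl (0, _) => 1
  | Sum.inl (i+1, s) => xg (i+1, s)
  | Sum.inr _ => yg

def rho : F →* F := FreeGroup.lift rhoFun

lemma rho_x0 (s : ℝ) : rho (xg (0, s)) = 1 := FreeGroup.lift_apply_of

lemma rho_xsucc (i : ℕ) (s : ℝ) : rho (xg (i+1, s)) = xg (i+1, s) := FreeGroup.lift_apply_of

lemma rho_y : rho yg = yg := FreeGroup.lift_apply_of

lemma exists_of_mem_zipWith {α β γ : Type*} (f : α → β → γ) :
    ∀ (l1 : List α) (l2 : List β) (x : γ), x ∈ List.zipWith f l1 l2 →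
      ∃ a b, a ∈ l1 ∧ b ∈ l2 ∧ x = f a b := by
  intro l1
  induction l1 with
  | nil => intro l2 x hx; simp at hx
  | cons a l ih =>
    intro l2 x hx
    cases l2 with
    | nil => simp at hx
    | cons b l2 =>
      simp only [List.zipWith_cons_cons, List.mem_cons] at hx
      rcases hx with rfl | hx
      · exact ⟨a, b, by simp, by simp, rfl⟩
      · obtain ⟨a', b', ha, hb, rfl⟩ := ih l2 x hx
        exact ⟨a', b', by simp [ha], by simp [hb], rfl⟩

lemma mem_cword_factor {r : List ℝ} {x : F}
    (hx : x ∈ List.zipWith (fun i a => xg (i + 1, a)) (List.range r.length) r) :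
    ∃ i a, x = xg (i + 1, a) := by
  obtain ⟨i, a, _, _, rfl⟩ := exists_of_mem_zipWith _ _ _ _ hx
  exact ⟨i, a, rfl⟩

lemma rho_cword (r : List ℝ) : rho (cword r) = cword r := by
  unfold cword
  rw [map_list_prod]
  congr 1
  conv_rhs => rw [← List.map_id (List.zipWith (fun i a => xg (i + 1, a)) (List.range r.length) r)]
  apply List.map_congr_left
  intro x hx
  obtain ⟨j, a, rfl⟩ := mem_cword_factor hx
  exact rho_xsucc j a

lemma rho_wword (r : List ℝ) : rho (wword r) = wword r := by
  simp [wword, rho_cword, rho_y]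

lemma rho_wn (n : ℕ) (r : List ℝ) : rho (wn n r) = wword r := by
  simp [wn, rho_x0, rho_wword]

/-- For a family `A_n ⊆ ℝ^{d(n)}` of sets of tuples, the intersection of the subgroup
generated by `{w_{n,r} : n ∈ ℕ, r ∈ A_n} ∪ {x_{(0,n)} : n ∈ ℕ}` with the subgroup
generated by `{y} ∪ {x_{(i,s)} : i ≥ 1, s ∈ ℝ}` equals the subgroup generated by
`{w_r : ∃ n, r ∈ A_n}`. -/
theorem closure_wn_inf_eq_closure_union
    (d : ℕ → ℕ) (A : ℕ → Set (List ℝ)) (hA : ∀ n, ∀ r ∈ A n, r.length = d n) :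
    Subgroup.closure
        ({g : F | ∃ (n : ℕ) (r : List ℝ), r ∈ A n ∧ g = wn n r} ∪
         {g : F | ∃ n : ℕ, g = xg (0, (n : ℝ))}) ⊓
      Subgroup.closure
        ({yg} ∪ {g : F | ∃ (i : ℕ) (s : ℝ), 1 ≤ i ∧ g = xg (i, s)}) =
      Subgroup.closure {g : F | ∃ (n : ℕ), ∃ r ∈ A n, g = wword r} := by
  set K : Subgroup F :=
    Subgroup.closure ({yg} ∪ {g : F | ∃ (i : ℕ) (s : ℝ), 1 ≤ i ∧ g = xg (i, s)}) with hKdef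
  set T : Subgroup F := Subgroup.closure {g : F | ∃ (n : ℕ), ∃ r ∈ A n, g = wword r} with hTdef
  have hcwordK : ∀ r : List ℝ, cword r ∈ K := by
    intro r
    apply Subgroup.list_prod_mem
    intro x hx
    obtain ⟨j, a, rfl⟩ := mem_cword_factor hx
    exact Subgroup.subset_closure (Or.inr ⟨j + 1, a, by omega, rfl⟩)
  have hwwordK : ∀ r : List ℝ, wword r ∈ K := by
    intro r
    exact mul_mem (mul_mem (inv_mem (hcwordK r)) (Subgroup.subset_closure (Or.inl rfl)))
      (hcwordK r)
  -- rho fixes every element of K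
  have hfix : ∀ g ∈ K, rho g = g := by
    intro g hg
    induction hg using Subgroup.closure_induction with
    | mem x hx =>
      rcases hx with rfl | ⟨i, s, hi, rfl⟩
      · exact rho_y
      · obtain ⟨j, rfl⟩ := Nat.exists_eq_add_of_le hi
        rw [Nat.add_comm]
        exact rho_xsucc j s
    | one => simp
    | mul x y _ _ hx hy => rw [map_mul, hx, hy]
    | inv x _ hx => rw [map_inv, hx]
  apply le_antisymm
  · rintro g ⟨hH, hK⟩
    have himg : ∀ h ∈ Subgroup.closure
        ({g : F | ∃ (n : ℕ) (r : List ℝ), r ∈ A n ∧ g = wn n r} ∪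
         {g : F | ∃ n : ℕ, g = xg (0, (n : ℝ))}), rho h ∈ T := by
      intro h hh
      induction hh using Subgroup.closure_induction with
      | mem x hx =>
        rcases hx with ⟨n, r, hr, rfl⟩ | ⟨n, rfl⟩
        · rw [rho_wn]
          exact Subgroup.subset_closure ⟨n, r, hr, rfl⟩
        · rw [rho_x0]; exact one_mem _
      | one => exact one_mem T
      | mul x y _ _ hx hy => rw [map_mul]; exact mul_mem hx hy
      | inv x _ hx => rw [map_inv]; exact inv_mem hx
    have := himg g hH
    rwa [hfix g hK] at this
  · rw [Subgroup.closure_le]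
    rintro g ⟨n, r, hr, rfl⟩
    refine Subgroup.mem_inf.mpr ⟨?_, hwwordK r⟩
    have h1 : wn n r ∈ Subgroup.closure
        ({g : F | ∃ (n : ℕ) (r : List ℝ), r ∈ A n ∧ g = wn n r} ∪
         {g : F | ∃ n : ℕ, g = xg (0, (n : ℝ))}) :=
      Subgroup.subset_closure (Or.inl ⟨n, r, hr, rfl⟩)
    have h2 : xg (0, (n : ℝ)) ∈ Subgroup.closure
        ({g : F | ∃ (n : ℕ) (r : List ℝ), r ∈ A n ∧ g = wn n r} ∪
         {g : F | ∃ n : ℕ, g = xg (0, (n : ℝ))}) :=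
      Subgroup.subset_closure (Or.inr ⟨n, rfl⟩)
    have : wword r = xg (0, (n : ℝ)) * wn n r * (xg (0, (n : ℝ)))⁻¹ := by
      unfold wn; group
    rw [this]
    exact mul_mem (mul_mem h2 h1) (inv_mem h2)
end

section
/- Let G be a group, A and B subgroups of G, φ : A ≃ B an isomorphism, and let G* be the HNN extension of G relative to A, B, φ, with stable letter t and canonical embedding of : G → G*, so that t · of(a) · t^{-1} = of(φ(a)) for all a ∈ A. Then for every g ∈ G, the element t · of(g) · t^{-1} lies in the image of `of` if and only if g ∈ A. -/
/-- In the HNN extension `G*` of `G` relative to subgroups `A`, `B` and an isomorphism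
`φ : A ≃* B`, with stable letter `t` and canonical embedding `of : G → G*`, the element
`t · of(g) · t⁻¹` lies in the image of `of` if and only if `g ∈ A`. -/
theorem t_mul_of_mul_t_inv_mem_range_iff
    {G : Type*} [Group G] (A B : Subgroup G) (φ : A ≃* B) (g : G) :
    (HNNExtension.t : HNNExtension G A B φ) * HNNExtension.of g * HNNExtension.t⁻¹ ∈
        (HNNExtension.of : G →* HNNExtension G A B φ).range ↔ g ∈ A := by
  constructor
  · intro h
    by_contra hg
    let w : HNNExtension.NormalWord.ReducedWord G A B :=
      { head := 1
        toList := [(1, g), (-1, 1)]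
        chain := by
          refine List.isChain_cons_cons.2 ⟨?_, List.isChain_singleton _⟩
          intro hmem
          exact absurd hmem hg }
    have hprod : w.prod φ =
        (HNNExtension.t : HNNExtension G A B φ) * HNNExtension.of g * HNNExtension.t⁻¹ := by
      simp [HNNExtension.NormalWord.ReducedWord.prod, w, mul_assoc]
    have := HNNExtension.ReducedWord.toList_eq_nil_of_mem_of_range φ w (hprod ▸ h)
    simp [w] at this
  · intro hg
    exact ⟨φ ⟨g, hg⟩, HNNExtension.equiv_eq_conj (φ := φ) ⟨g, hg⟩⟩
end

section
/- Let G be a group, A a subgroup of G, and let G* be the HNN extension of G relative to A, A and the identity isomorphism of A, with stable letter t and canonical embedding of : G → G*, so that t · of(a) · t^{-1} = of(a) for all a ∈ A. Then for every g ∈ G, the elements t and of(g) commute in G* (i.e. t · of(g) = of(g) · t) if and only if g ∈ A. -/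
/-- In the HNN extension of `G` relative to a subgroup `A`, `A` and the identity
isomorphism of `A`, with stable letter `t` and canonical embedding `of`, the stable
letter `t` commutes with `of(g)` if and only if `g ∈ A`. -/
theorem t_commutes_iff_mem
    {G : Type*} [Group G] (A : Subgroup G) (g : G) :
    (HNNExtension.t : HNNExtension G A A (MulEquiv.refl A)) * HNNExtension.of g =
        HNNExtension.of g * HNNExtension.t ↔ g ∈ A := by
  constructor
  · intro h
    by_contra hg
    let w : HNNExtension.NormalWord.ReducedWord G A A :=
      { head := 1
        toList := [(1, g), (-1, 1)]
        chain := by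
          refine List.isChain_cons_cons.2 ⟨?_, List.isChain_singleton _⟩
          intro hmem
          exact absurd hmem hg }
    have hprod : w.prod (MulEquiv.refl A) =
        HNNExtension.t * HNNExtension.of g * HNNExtension.t⁻¹ := by
      simp [HNNExtension.NormalWord.ReducedWord.prod, w, zpow_neg]
    have hmem : w.prod (MulEquiv.refl A) ∈
        (HNNExtension.of.range :
          Subgroup (HNNExtension G A A (MulEquiv.refl A))) := by
      refine ⟨g, ?_⟩
      rw [hprod, h]
      group
    have := HNNExtension.ReducedWord.toList_eq_nil_of_mem_of_range
      (MulEquiv.refl A) w hmem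
    simp [w] at this
  · intro hg
    have := HNNExtension.t_mul_of (φ := MulEquiv.refl A) ⟨g, hg⟩
    simpa using this
end

section
/- The intersection of the subgroup of P generated by the set s·j(G)·s^{-1} ∪ t·j(G)·t^{-1} (that is, all elements s·j(g)·s^{-1} and t·j(g)·t^{-1} for g ∈ G) with the image j(G) equals the image under j of the subgroup of G generated by A ∪ B. -/
/-- The HNN extension of `G` relative to a subgroup `A`, `A`, and the identity
isomorphism of `A`. -/
abbrev GA (G : Type*) [Group G] (A : Subgroup G) : Type _ :=
  HNNExtension G A A (MulEquiv.refl A)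

/-- The two-element family consisting of `G_A` and `G_B`. -/
def Kfam (G : Type*) [Group G] (A B : Subgroup G) : Bool → Type _ :=
  fun b => cond b (GA G A) (GA G B)

instance (G : Type*) [Group G] (A B : Subgroup G) : ∀ b, Group (Kfam G A B b)
  | true => inferInstanceAs (Group (GA G A))
  | false => inferInstanceAs (Group (GA G B))

/-- The canonical maps of `G` into `G_A` and `G_B`. -/
def ffam (G : Type*) [Group G] (A B : Subgroup G) : ∀ b, G →* Kfam G A B b
  | true => (HNNExtension.of : G →* GA G A)
  | false => (HNNExtension.of : G →* GA G B)

/-- The amalgamated free product `P` of `G_A` and `G_B` over `G`. -/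
abbrev Pushout (G : Type*) [Group G] (A B : Subgroup G) : Type _ :=
  Monoid.PushoutI (ffam G A B)

/-- The canonical map `j : G →* P`. -/
def jmap (G : Type*) [Group G] (A B : Subgroup G) : G →* Pushout G A B :=
  Monoid.PushoutI.base (ffam G A B)

/-- The image `s` in `P` of the stable letter of `G_A`. -/
def sletter (G : Type*) [Group G] (A B : Subgroup G) : Pushout G A B :=
  Monoid.PushoutI.of (φ := ffam G A B) true (HNNExtension.t : GA G A)

/-- The image `t` in `P` of the stable letter of `G_B`. -/
def tletter (G : Type*) [Group G] (A B : Subgroup G) : Pushout G A B :=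
  Monoid.PushoutI.of (φ := ffam G A B) false (HNNExtension.t : GA G B)

namespace CCAux

open Subgroup Equiv

variable {G : Type*} [Group G] (A B : Subgroup G)

noncomputable section
open scoped Classical

abbrev Hs : Subgroup G := Subgroup.closure ((A : Set G) ∪ (B : Set G))

abbrev Y := Option (G ⧸ Hs A B)

def e : G ⧸ Hs A B := QuotientGroup.mk 1

/-- G acting on Y -/
def ρ : G →* Equiv.Perm (Y A B) where
  toFun g := Equiv.optionCongr (MulAction.toPerm g)
  map_one' := by apply Equiv.ext; intro x; cases x <;> simp
  map_mul' g h := by apply Equiv.ext; intro x; cases x <;> simp [mul_smul]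

def pt : Y A B := some (e A B)

def σ : Equiv.Perm (Y A B) := Equiv.swap none (pt A B)

theorem ρ_none (g : G) : ρ A B g none = none := rfl

theorem ρ_some (g : G) (q : G ⧸ Hs A B) : ρ A B g (some q) = some (g • q) := rfl

theorem smul_e (g : G) : g • e A B = QuotientGroup.mk g := by
  have := MulAction.Quotient.smul_mk (Hs A B) g 1
  simpa [e] using this

theorem smul_e_of_mem {g : G} (hg : g ∈ Hs A B) : g • e A B = e A B := by
  rw [smul_e, e, QuotientGroup.eq]
  simpa using inv_mem hg

theorem comm_of_mem {g : G} (hg : g ∈ Hs A B) :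
    σ A B * ρ A B g = ρ A B g * σ A B := by
  have h1 : g • e A B = e A B := smul_e_of_mem A B hg
  apply Equiv.ext
  intro x
  simp only [Equiv.Perm.mul_apply]
  cases x with
  | none =>
      rw [ρ_none]
      show σ A B none = ρ A B g (σ A B none)
      rw [σ, Equiv.swap_apply_left, pt, ρ_some, h1]
  | some q =>
      by_cases hq : q = e A B
      · subst hq
        rw [ρ_some, h1]
        show σ A B (pt A B) = ρ A B g (σ A B (pt A B))
        rw [σ, Equiv.swap_apply_right, ρ_none]
      · have hgq : g • q ≠ e A B := by
          intro h
          apply hq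
          have : g⁻¹ • (g • q) = g⁻¹ • e A B := by rw [h]
          rwa [inv_smul_smul, smul_e_of_mem A B (inv_mem hg)] at this
        have fix : ∀ r : G ⧸ Hs A B, r ≠ e A B → σ A B (some r) = some r := by
          intro r hr
          exact Equiv.swap_apply_of_ne_of_ne (by simp) (by simp [pt, hr])
        rw [ρ_some, fix _ hgq, fix _ hq, ρ_some]

theorem hxA : ∀ a : ↥A, σ A B * ρ A B ↑a = ρ A B ↑((MulEquiv.refl ↥A) a) * σ A B :=
  fun a => comm_of_mem A B (Subgroup.subset_closure (Or.inl a.2))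

theorem hxB : ∀ b : ↥B, σ A B * ρ A B ↑b = ρ A B ↑((MulEquiv.refl ↥B) b) * σ A B :=
  fun b => comm_of_mem A B (Subgroup.subset_closure (Or.inr b.2))

/-- Homomorphism `G_A →* Perm Y`. -/
def ΦA : GA G A →* Equiv.Perm (Y A B) :=
  HNNExtension.lift (ρ A B) (σ A B) (hxA A B)

/-- Homomorphism `G_B →* Perm Y`. -/
def ΦB : GA G B →* Equiv.Perm (Y A B) :=
  HNNExtension.lift (ρ A B) (σ A B) (hxB A B)

def fm : ∀ b, Kfam G A B b →* Equiv.Perm (Y A B)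
  | true => ΦA A B
  | false => ΦB A B

theorem fm_comp (b : Bool) : (fm A B b).comp (ffam G A B b) = ρ A B := by
  cases b
  · exact MonoidHom.ext fun g => HNNExtension.lift_of (ρ A B) (σ A B) (hxB A B) g
  · exact MonoidHom.ext fun g => HNNExtension.lift_of (ρ A B) (σ A B) (hxA A B) g

/-- The homomorphism `P →* Perm Y`. -/
def Φ : Pushout G A B →* Equiv.Perm (Y A B) :=
  Monoid.PushoutI.lift (fm A B) (ρ A B) (fm_comp A B)

theorem Φ_jmap (g : G) : Φ A B (jmap G A B g) = ρ A B g :=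
  Monoid.PushoutI.lift_base _ _ _ _

theorem Φ_s : Φ A B (sletter G A B) = σ A B := by
  show Φ A B (Monoid.PushoutI.of (φ := ffam G A B) true HNNExtension.t) = σ A B
  rw [Φ]
  refine (Monoid.PushoutI.lift_of (fm A B) (ρ A B) (fm_comp A B) (i := true) (HNNExtension.t : GA G A)).trans ?_
  exact HNNExtension.lift_t (ρ A B) (σ A B) (hxA A B)

theorem Φ_t : Φ A B (tletter G A B) = σ A B := by
  show Φ A B (Monoid.PushoutI.of (φ := ffam G A B) false HNNExtension.t) = σ A B
  rw [Φ]
  refine (Monoid.PushoutI.lift_of (fm A B) (ρ A B) (fm_comp A B) (i := false) (HNNExtension.t : GA G B)).trans ?_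
  exact HNNExtension.lift_t (ρ A B) (σ A B) (hxB A B)

theorem σ_fix : σ A B (ρ A B g (σ A B (pt A B))) = pt A B := by
  rw [σ, Equiv.swap_apply_right, ρ_none, Equiv.swap_apply_left]

theorem jmap_conj_A {a : G} (ha : a ∈ A) :
    jmap G A B a = sletter G A B * jmap G A B a * (sletter G A B)⁻¹ := by
  have h : (HNNExtension.of a : GA G A) =
      HNNExtension.t * HNNExtension.of a * HNNExtension.t⁻¹ := by
    simpa using HNNExtension.equiv_eq_conj (φ := MulEquiv.refl A) ⟨a, ha⟩
  have h2 := congrArg (Monoid.PushoutI.of (φ := ffam G A B) true) h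
  have h3 : Monoid.PushoutI.of (φ := ffam G A B) true (ffam G A B true a) =
      Monoid.PushoutI.of (φ := ffam G A B) true ((show Kfam G A B true from HNNExtension.t) *
        ffam G A B true a * (show Kfam G A B true from HNNExtension.t)⁻¹) := h2
  rw [map_mul, map_mul, map_inv] at h3
  rw [sletter, jmap, ← Monoid.PushoutI.of_apply_eq_base (φ := ffam G A B) true a]
  exact h3

theorem jmap_conj_B {a : G} (ha : a ∈ B) :
    jmap G A B a = tletter G A B * jmap G A B a * (tletter G A B)⁻¹ := by
  have h : (HNNExtension.of a : GA G B) =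
      HNNExtension.t * HNNExtension.of a * HNNExtension.t⁻¹ := by
    simpa using HNNExtension.equiv_eq_conj (φ := MulEquiv.refl B) ⟨a, ha⟩
  have h2 := congrArg (Monoid.PushoutI.of (φ := ffam G A B) false) h
  have h3 : Monoid.PushoutI.of (φ := ffam G A B) false (ffam G A B false a) =
      Monoid.PushoutI.of (φ := ffam G A B) false ((show Kfam G A B false from HNNExtension.t) *
        ffam G A B false a * (show Kfam G A B false from HNNExtension.t)⁻¹) := h2
  rw [map_mul, map_mul, map_inv] at h3
  rw [tletter, jmap, ← Monoid.PushoutI.of_apply_eq_base (φ := ffam G A B) false a]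
  exact h3

end
end CCAux

/-- In the amalgamated free product `P` of the HNN extensions `G_A` and `G_B` over `G`,
the intersection of the subgroup generated by `s·j(G)·s⁻¹ ∪ t·j(G)·t⁻¹` with the image
`j(G)` equals the image under `j` of the subgroup of `G` generated by `A ∪ B`. -/
theorem closure_conj_inf_range_eq_map_closure
    {G : Type*} [Group G] (A B : Subgroup G) :
    Subgroup.closure
        ({p : Pushout G A B | ∃ g : G, p = sletter G A B * jmap G A B g * (sletter G A B)⁻¹} ∪
         {p : Pushout G A B | ∃ g : G, p = tletter G A B * jmap G A B g * (tletter G A B)⁻¹}) ⊓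
      (jmap G A B).range =
      Subgroup.map (jmap G A B) (Subgroup.closure ((A : Set G) ∪ (B : Set G))) := by
  classical
  open CCAux in
  apply le_antisymm
  · rintro x ⟨hxQ, g, rfl⟩
    refine ⟨g, ?_, rfl⟩
    -- stabilizer subgroup of pt pulled back along Φ
    let S : Subgroup (Pushout G A B) :=
      (MulAction.stabilizer (Equiv.Perm (CCAux.Y A B)) (CCAux.pt A B)).comap (CCAux.Φ A B)
    have hgen : ({p : Pushout G A B | ∃ g : G, p = sletter G A B * jmap G A B g *
          (sletter G A B)⁻¹} ∪
        {p : Pushout G A B | ∃ g : G, p = tletter G A B * jmap G A B g * (tletter G A B)⁻¹})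
        ⊆ S := by
      rintro p (⟨g, rfl⟩ | ⟨g, rfl⟩) <;>
      · show _ ∈ MulAction.stabilizer _ _
        rw [MulAction.mem_stabilizer_iff]
        simp only [map_mul, map_inv, CCAux.Φ_jmap, CCAux.Φ_s, CCAux.Φ_t]
        show (CCAux.σ A B * CCAux.ρ A B g * (CCAux.σ A B)⁻¹) (CCAux.pt A B) = CCAux.pt A B
        rw [CCAux.σ, Equiv.swap_inv, ← CCAux.σ]
        exact CCAux.σ_fix A B
    have hx : jmap G A B g ∈ S := (Subgroup.closure_le S).2 hgen hxQ
    have hfix : CCAux.ρ A B g (CCAux.pt A B) = CCAux.pt A B := by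
      have := hx
      rw [Subgroup.mem_comap, MulAction.mem_stabilizer_iff] at this
      rwa [CCAux.Φ_jmap] at this
    rw [CCAux.pt, CCAux.ρ_some, Option.some_inj, CCAux.smul_e] at hfix
    rw [CCAux.e, QuotientGroup.eq] at hfix
    simpa using inv_mem hfix
  · rintro x ⟨g, hg, rfl⟩
    refine ⟨?_, g, rfl⟩
    revert g
    have : Subgroup.closure ((A : Set G) ∪ (B : Set G)) ≤
        Subgroup.comap (jmap G A B) (Subgroup.closure
          ({p : Pushout G A B | ∃ g : G, p = sletter G A B * jmap G A B g *
              (sletter G A B)⁻¹} ∪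
           {p : Pushout G A B | ∃ g : G, p = tletter G A B * jmap G A B g *
              (tletter G A B)⁻¹})) := by
      rw [Subgroup.closure_le]
      rintro a (ha | ha)
      · exact Subgroup.subset_closure (Or.inl ⟨a, CCAux.jmap_conj_A A B ha⟩)
      · exact Subgroup.subset_closure (Or.inr ⟨a, CCAux.jmap_conj_B A B ha⟩)
    exact fun g hg => this hg
end

section
/- Let the generator set be ℝ ⊕ Unit, writing u(b) for the generator indexed by b ∈ ℝ and v for the extra generator; for a ≠ 0 define the word s(a) := v · u(1/a) · v · u(a) · v · u(1/a) in the free group. Let R be the union of the relator families SL1 := {u(b)·u(c)·u(b+c)^{-1} : b, c ∈ ℝ}, SL2 := {s(a)·s(b)·s(a·b)^{-1} : a, b ∈ ℝ, a ≠ 0, b ≠ 0}, SL3 := {v·v·s(−1)^{-1}}, and SL4 := {s(a)·u(b)·s(1/a)·u(b·a²)^{-1} : a ≠ 0, b ∈ ℝ}. Then the presented group ⟨ℝ ⊕ Unit | R⟩ is isomorphic to SL₂(ℝ) (Matrix.SpecialLinearGroup (Fin 2) ℝ), via the homomorphism induced by sending u(b) to the matrix [[1, b], [0, 1]] and v to the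 matrix [[0, 1], [−1, 0]]. -/
/-- The generator `u(b)`, `b ∈ ℝ`. -/
def ugen (b : ℝ) : FreeGroup (ℝ ⊕ Unit) := FreeGroup.of (Sum.inl b)

/-- The extra generator `v`. -/
def vgen : FreeGroup (ℝ ⊕ Unit) := FreeGroup.of (Sum.inr ())

/-- The word `s(a) := v · u(1/a) · v · u(a) · v · u(1/a)`. -/
noncomputable def sword (a : ℝ) : FreeGroup (ℝ ⊕ Unit) :=
  vgen * ugen (1 / a) * vgen * ugen a * vgen * ugen (1 / a)

/-- The relators SL1–SL4 of the Weil presentation of `SL₂(ℝ)`. -/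
def relsSL : Set (FreeGroup (ℝ ⊕ Unit)) :=
  {g | ∃ b c : ℝ, g = ugen b * ugen c * (ugen (b + c))⁻¹} ∪
  {g | ∃ a b : ℝ, a ≠ 0 ∧ b ≠ 0 ∧ g = sword a * sword b * (sword (a * b))⁻¹} ∪
  {vgen * vgen * (sword (-1))⁻¹} ∪
  {g | ∃ a b : ℝ, a ≠ 0 ∧ g = sword a * ugen b * sword (1 / a) * (ugen (b * a ^ 2))⁻¹}

/-- The matrix `U(b) = [[1, b], [0, 1]]` as an element of `SL₂(ℝ)`. -/
def Umat (b : ℝ) : Matrix.SpecialLinearGroup (Fin 2) ℝ :=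
  ⟨!![1, b; 0, 1], by simp [Matrix.det_fin_two_of]⟩

/-- The matrix `V = [[0, 1], [−1, 0]]` as an element of `SL₂(ℝ)`. -/
def Vmat : Matrix.SpecialLinearGroup (Fin 2) ℝ :=
  ⟨!![0, 1; -1, 0], by norm_num [Matrix.det_fin_two_of]⟩

namespace SL2Weil

abbrev SL2 := Matrix.SpecialLinearGroup (Fin 2) ℝ
abbrev P := PresentedGroup relsSL

noncomputable def pu (b : ℝ) : P := PresentedGroup.of (Sum.inl b)
noncomputable def pv : P := PresentedGroup.of (Sum.inr ())
noncomputable def ps (a : ℝ) : P := pv * pu (1/a) * pv * pu a * pv * pu (1/a)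

/-! ### relations in the presented group -/

lemma mk_rel {r : FreeGroup (ℝ ⊕ Unit)} (h : r ∈ relsSL) : PresentedGroup.mk relsSL r = 1 :=
  (QuotientGroup.eq_one_iff r).2 (Subgroup.subset_normalClosure h)

lemma mk_ugen (b : ℝ) : PresentedGroup.mk relsSL (ugen b) = pu b := rfl
lemma mk_vgen : PresentedGroup.mk relsSL vgen = pv := rfl
lemma mk_sword (a : ℝ) : PresentedGroup.mk relsSL (sword a) = ps a := by
  simp [sword, ps, map_mul, mk_ugen, mk_vgen]

lemma p1 (b c : ℝ) : pu b * pu c = pu (b + c) := by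
  have h := mk_rel (show ugen b * ugen c * (ugen (b+c))⁻¹ ∈ relsSL by
    left; left; left; exact ⟨b, c, rfl⟩)
  have := (mul_inv_eq_one).1 (by simpa [map_mul, map_inv, mk_ugen] using h)
  simpa using this

lemma p2 {a b : ℝ} (ha : a ≠ 0) (hb : b ≠ 0) : ps a * ps b = ps (a * b) := by
  have h := mk_rel (show sword a * sword b * (sword (a*b))⁻¹ ∈ relsSL by
    left; left; right; exact ⟨a, b, ha, hb, rfl⟩)
  have := (mul_inv_eq_one).1 (by simpa [map_mul, map_inv, mk_sword] using h)
  simpa using this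

lemma p3 : pv * pv = ps (-1) := by
  have h := mk_rel (show vgen * vgen * (sword (-1))⁻¹ ∈ relsSL by left; right; rfl)
  have := (mul_inv_eq_one).1 (by simpa [map_mul, map_inv, mk_sword, mk_vgen] using h)
  simpa using this

lemma p4 {a : ℝ} (ha : a ≠ 0) (b : ℝ) : ps a * pu b * ps (1/a) = pu (b * a ^ 2) := by
  have h := mk_rel (show sword a * ugen b * sword (1/a) * (ugen (b * a^2))⁻¹ ∈ relsSL by
    right; exact ⟨a, b, ha, rfl⟩)
  have := (mul_inv_eq_one).1 (by simpa [map_mul, map_inv, mk_sword, mk_ugen] using h)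
  simpa using this

lemma pu0 : pu 0 = 1 := by
  have h : pu 0 * pu 0 = pu 0 * 1 := by simpa using p1 0 0
  exact mul_left_cancel h

lemma puinv (b : ℝ) : (pu b)⁻¹ = pu (-b) := by
  rw [inv_eq_of_mul_eq_one_right]; rw [p1]; simp [pu0]

lemma ps1 : ps 1 = 1 := by
  have h : ps 1 * ps 1 = ps 1 * 1 := by simpa using p2 (one_ne_zero (α := ℝ)) one_ne_zero
  exact mul_left_cancel h

lemma psinv {a : ℝ} (ha : a ≠ 0) : (ps a)⁻¹ = ps (1/a) := by
  rw [inv_eq_of_mul_eq_one_right]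
  rw [p2 ha (by simpa using ha)]
  simp [ps1, ha]

lemma p4' {a : ℝ} (ha : a ≠ 0) (b : ℝ) : ps a * pu b = pu (b * a ^ 2) * ps a := by
  have h := p4 ha b
  have h2 : ps a * pu b = pu (b * a ^ 2) * (ps (1/a))⁻¹ := by
    rw [← h]; group
  rw [h2, psinv (by simpa using ha)]
  simp [ha]

lemma pC {t : ℝ} (ht : t ≠ 0) : ps t * pv = pv * ps (1/t) := by
  have key : pv⁻¹ * ps t * pv = ps (1/t) := by
    have e1 : pv⁻¹ * ps t * pv
        = pu (1/t) * (pv * pu t * pv * pu (1/t) * pv * pu t) * (pu t)⁻¹ := by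
      simp only [ps]; group
    have e2 : pv * pu t * pv * pu (1/t) * pv * pu t = ps (1/t) := by
      simp only [ps, one_div, inv_inv, one_div_one_div]
    have harg : -t * (1/t) ^ 2 = -(1/t) := by field_simp
    have h3 : ps (1/t) * pu (-t) = pu (-(1/t)) * ps (1/t) := by
      rw [p4' (by simpa using ht) (-t), harg]
    rw [e1, e2, puinv]
    rw [mul_assoc, h3, ← mul_assoc, p1]
    norm_num [pu0]
  calc ps t * pv = pv * (pv⁻¹ * ps t * pv) := by group
  _ = pv * ps (1/t) := by rw [key]

lemma pvinv : pv⁻¹ = pv * ps (-1) := by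
  have h : pv * (pv * ps (-1)) = 1 := by
    rw [← mul_assoc, p3, p2 (by norm_num) (by norm_num)]
    norm_num [ps1]
  exact inv_eq_of_mul_eq_one_right h

lemma pD {x : ℝ} (hx : x ≠ 0) :
    pv * pu x * pv = pu (-(1/x)) * pv * ps (-x) * pu (-(1/x)) := by
  have e1 : pv * pu x * pv = (pu (1/x))⁻¹ * pv⁻¹ * ps x * (pu (1/x))⁻¹ := by
    simp only [ps]; group
  rw [e1, puinv, pvinv]
  have h2 : pv * ps (-1) * ps x = pv * ps (-x) := by
    rw [mul_assoc, p2 (by norm_num) hx]; norm_num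
  rw [mul_assoc (pu (-(1/x))), h2]
  group

lemma pv4 : pv * pv * pv * pv = 1 := by
  have e : pv * pv * pv * pv = (pv * pv) * (pv * pv) := by group
  rw [e, p3, p2 (by norm_num : (-1:ℝ) ≠ 0) (by norm_num : (-1:ℝ) ≠ 0)]
  norm_num [ps1]

lemma pvinv' : pv⁻¹ = pv * pv * pv :=
  inv_eq_of_mul_eq_one_right (by rw [← mul_assoc, ← mul_assoc, pv4])

/-! ### matrix lemmas -/

noncomputable def Smat (a : ℝ) : SL2 :=
  if h : a = 0 then 1 else ⟨!![a, 0; 0, 1/a], by simp [Matrix.det_fin_two_of, h]⟩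

lemma Smat_def {a : ℝ} (h : a ≠ 0) :
    (Smat a : Matrix (Fin 2) (Fin 2) ℝ) = !![a, 0; 0, 1/a] := by
  simp [Smat, h]

lemma Smat_inv_def {a : ℝ} (h : a ≠ 0) :
    (Smat a⁻¹ : Matrix (Fin 2) (Fin 2) ℝ) = !![a⁻¹, 0; 0, a] := by
  have : a⁻¹ ≠ 0 := inv_ne_zero h
  rw [Smat_def this]; simp

lemma LU (b c : ℝ) : Umat b * Umat c = Umat (b + c) := by
  ext i j
  simp only [Matrix.SpecialLinearGroup.coe_mul]
  fin_cases i <;> fin_cases j <;>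
    · simp [Umat, Matrix.mul_apply, Fin.sum_univ_two]
      try ring

lemma LU0 : Umat 0 = 1 := by
  ext i j
  fin_cases i <;> fin_cases j <;> simp [Umat]

lemma LUinv (b : ℝ) : (Umat b)⁻¹ = Umat (-b) := by
  rw [inv_eq_of_mul_eq_one_right]; rw [LU]; simp [LU0]

lemma LS {a : ℝ} (h : a ≠ 0) :
    Vmat * Umat (1/a) * Vmat * Umat a * Vmat * Umat (1/a) = Smat a := by
  ext i j
  simp only [Matrix.SpecialLinearGroup.coe_mul]
  fin_cases i <;> fin_cases j <;>
    · simp [Umat, Vmat, Smat_def h, Matrix.mul_apply, Fin.sum_univ_two]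
      try field_simp
      try ring
      try simp

lemma LSS {a b : ℝ} (ha : a ≠ 0) (hb : b ≠ 0) : Smat a * Smat b = Smat (a * b) := by
  ext i j
  simp only [Matrix.SpecialLinearGroup.coe_mul]
  fin_cases i <;> fin_cases j <;>
    · simp [Smat_def ha, Smat_def hb, Smat_def (mul_ne_zero ha hb),
        Matrix.mul_apply, Fin.sum_univ_two]
      try field_simp
      try ring

lemma LVV : Vmat * Vmat = Smat (-1) := by
  have h1 : (-1 : ℝ) ≠ 0 := by norm_num
  ext i j
  simp only [Matrix.SpecialLinearGroup.coe_mul]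
  fin_cases i <;> fin_cases j <;>
    · simp [Vmat, Smat_def h1, Matrix.mul_apply, Fin.sum_univ_two]
      try norm_num

lemma LSU {a : ℝ} (ha : a ≠ 0) (b : ℝ) :
    Smat a * Umat b * Smat (1/a) = Umat (b * a ^ 2) := by
  ext i j
  simp only [Matrix.SpecialLinearGroup.coe_mul]
  fin_cases i <;> fin_cases j <;>
    · simp [Smat_def ha, Smat_inv_def ha, Umat, Matrix.mul_apply, Fin.sum_univ_two]
      try field_simp
      try ring

lemma LV4 : Vmat * Vmat * Vmat * Vmat = 1 := by
  ext i j
  simp only [Matrix.SpecialLinearGroup.coe_mul]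
  fin_cases i <;> fin_cases j <;>
    simp [Vmat, Matrix.mul_apply, Fin.sum_univ_two]

lemma LVinv : Vmat⁻¹ = Vmat * Vmat * Vmat :=
  inv_eq_of_mul_eq_one_right (by rw [← mul_assoc, ← mul_assoc, LV4])

lemma detM (M : SL2) :
    (M : Matrix (Fin 2) (Fin 2) ℝ) 0 0 * (M : Matrix (Fin 2) (Fin 2) ℝ) 1 1
      - (M : Matrix (Fin 2) (Fin 2) ℝ) 0 1 * (M : Matrix (Fin 2) (Fin 2) ℝ) 1 0 = 1 := by
  have h := M.2
  rwa [Matrix.det_fin_two] at h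

lemma decomp_ne (M : SL2) (hc : (M : Matrix (Fin 2) (Fin 2) ℝ) 1 0 ≠ 0) :
    Umat ((M : Matrix (Fin 2) (Fin 2) ℝ) 0 0 / (M : Matrix (Fin 2) (Fin 2) ℝ) 1 0) *
      Smat (-(1 / (M : Matrix (Fin 2) (Fin 2) ℝ) 1 0)) * Vmat *
      Umat ((M : Matrix (Fin 2) (Fin 2) ℝ) 1 1 / (M : Matrix (Fin 2) (Fin 2) ℝ) 1 0) = M := by
  have hdet := detM M
  have hs : (-(1/(M : Matrix (Fin 2) (Fin 2) ℝ) 1 0) : ℝ) ≠ 0 := by simp [hc]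
  ext i j
  simp only [Matrix.SpecialLinearGroup.coe_mul]
  fin_cases i <;> fin_cases j <;>
    · simp only [Matrix.SpecialLinearGroup.coe_mul, Umat, Vmat, Smat_def hs,
        Matrix.mul_apply, Fin.sum_univ_two]
      simp
      try field_simp
      try linear_combination hdet
      try rfl

lemma decomp_eq (M : SL2) (hc : (M : Matrix (Fin 2) (Fin 2) ℝ) 1 0 = 0) :
    Smat ((M : Matrix (Fin 2) (Fin 2) ℝ) 0 0) *
      Umat ((M : Matrix (Fin 2) (Fin 2) ℝ) 0 1 / (M : Matrix (Fin 2) (Fin 2) ℝ) 0 0) = M := by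
  have hdet := detM M
  rw [hc] at hdet
  have had : (M : Matrix (Fin 2) (Fin 2) ℝ) 0 0 * (M : Matrix (Fin 2) (Fin 2) ℝ) 1 1 = 1 := by
    linarith
  have ha : (M : Matrix (Fin 2) (Fin 2) ℝ) 0 0 ≠ 0 := left_ne_zero_of_mul_eq_one had
  ext i j
  simp only [Matrix.SpecialLinearGroup.coe_mul]
  fin_cases i <;> fin_cases j <;>
    · simp only [Matrix.SpecialLinearGroup.coe_mul, Umat, Smat_def ha,
        Matrix.mul_apply, Fin.sum_univ_two]
      simp [hc]
      try field_simp
      try linear_combination had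
      try linear_combination -had

/-! ### the homomorphism -/

noncomputable def Fgen : ℝ ⊕ Unit → SL2
  | Sum.inl b => Umat b
  | Sum.inr _ => Vmat

lemma lift_ugen (b : ℝ) : FreeGroup.lift Fgen (ugen b) = Umat b := FreeGroup.lift_apply_of
lemma lift_vgen : FreeGroup.lift Fgen vgen = Vmat := FreeGroup.lift_apply_of
lemma lift_sword {a : ℝ} (h : a ≠ 0) : FreeGroup.lift Fgen (sword a) = Smat a := by
  simp only [sword, map_mul, lift_ugen, lift_vgen]
  exact LS h

lemma hrels : ∀ r ∈ relsSL, FreeGroup.lift Fgen r = 1 := by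
  intro r hr
  rcases hr with ((hr | hr) | hr) | hr
  · obtain ⟨b, c, rfl⟩ := hr
    simp only [map_mul, map_inv, lift_ugen]
    rw [LU]; simp
  · obtain ⟨a, b, ha, hb, rfl⟩ := hr
    simp only [map_mul, map_inv, lift_sword ha, lift_sword hb, lift_sword (mul_ne_zero ha hb)]
    rw [LSS ha hb]; simp
  · rw [Set.mem_singleton_iff] at hr
    subst hr
    simp only [map_mul, map_inv, lift_vgen, lift_sword (by norm_num : (-1:ℝ) ≠ 0)]
    rw [LVV]; simp
  · obtain ⟨a, b, ha, rfl⟩ := hr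
    simp only [map_mul, map_inv, lift_ugen, lift_sword ha, lift_sword (one_div_ne_zero ha)]
    rw [LSU ha]; simp

noncomputable def F : P →* SL2 := PresentedGroup.toGroup hrels

lemma F_mk (w : FreeGroup (ℝ ⊕ Unit)) :
    F (PresentedGroup.mk relsSL w) = FreeGroup.lift Fgen w := rfl
lemma F_pu (b : ℝ) : F (pu b) = Umat b := PresentedGroup.toGroup.of hrels
lemma F_pv : F pv = Vmat := PresentedGroup.toGroup.of hrels
lemma F_ps {a : ℝ} (h : a ≠ 0) : F (ps a) = Smat a := by
  simp only [ps, map_mul, F_pu, F_pv]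
  exact LS h


/-! ### the inverse map -/

open Classical in
noncomputable def phi0 (a B c d : ℝ) : P :=
  if c = 0 then ps a * pu (B / a)
  else pu (a / c) * ps (-(1 / c)) * pv * pu (d / c)

noncomputable def phi (M : SL2) : P :=
  phi0 ((M : Matrix (Fin 2) (Fin 2) ℝ) 0 0) ((M : Matrix (Fin 2) (Fin 2) ℝ) 0 1)
    ((M : Matrix (Fin 2) (Fin 2) ℝ) 1 0) ((M : Matrix (Fin 2) (Fin 2) ℝ) 1 1)

lemma keyU {a B c d : ℝ} (hdet : a * d - B * c = 1) (b : ℝ) :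
    phi0 a (a * b + B) c (c * b + d) = phi0 a B c d * pu b := by
  by_cases hc : c = 0
  · have had : a * d = 1 := by rw [hc] at hdet; linarith
    have ha : a ≠ 0 := left_ne_zero_of_mul_eq_one had
    simp only [phi0, if_pos hc]
    have e : (a * b + B) / a = B / a + b := by field_simp; ring
    rw [e, ← p1 (B / a) b]
    group
  · simp only [phi0, if_neg hc]
    have e : (c * b + d) / c = d / c + b := by field_simp; ring
    rw [e, ← p1 (d / c) b]
    group

lemma key3 {a B c d : ℝ} (hc : c ≠ 0) (hd : d ≠ 0) (hdet : a * d - B * c = 1) :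
    pu (a/c) * ps (-(1/c)) * pv * pu (d/c) * pv
      = pu (B/d) * ps (1/d) * pv * pu (-(c/d)) := by
  have hx : (d/c : ℝ) ≠ 0 := div_ne_zero hd hc
  have hpD := pD hx
  have e0 : -(1/(d/c)) = -(c/d) := by rw [one_div_div]
  rw [e0] at hpD
  have h1c : (-(1/c) : ℝ) ≠ 0 := neg_ne_zero.2 (one_div_ne_zero hc)
  have harg1 : -(c/d) * (-(1/c)) ^ 2 = -(1/(c*d)) := by field_simp
  have harg2 : a/c + -(1/(c*d)) = B/d := by
    field_simp
    linear_combination hdet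
  have harg3 : 1/(-(1/c)) = -c := by field_simp
  have harg4 : (-c) * -(d/c) = d := by field_simp
  have hC2 : ps (1/d) * pv = pv * ps d := by
    have h := pC (one_div_ne_zero hd)
    rwa [one_div_one_div] at h
  calc pu (a/c) * ps (-(1/c)) * pv * pu (d/c) * pv
      = pu (a/c) * ps (-(1/c)) * (pv * pu (d/c) * pv) := by group
    _ = pu (a/c) * ps (-(1/c)) * (pu (-(c/d)) * pv * ps (-(d/c)) * pu (-(c/d))) := by rw [hpD]
    _ = pu (a/c) * (ps (-(1/c)) * pu (-(c/d))) * (pv * ps (-(d/c)) * pu (-(c/d))) := by group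
    _ = pu (a/c) * (pu (-(c/d) * (-(1/c)) ^ 2) * ps (-(1/c)))
          * (pv * ps (-(d/c)) * pu (-(c/d))) := by rw [p4' h1c]
    _ = pu (a/c) * pu (-(1/(c*d))) * (ps (-(1/c)) * pv) * (ps (-(d/c)) * pu (-(c/d))) := by
          rw [harg1]; group
    _ = pu (a/c + -(1/(c*d))) * (pv * ps (1/(-(1/c)))) * (ps (-(d/c)) * pu (-(c/d))) := by
          rw [p1, pC h1c]
    _ = pu (B/d) * (pv * ps (-c)) * (ps (-(d/c)) * pu (-(c/d))) := by rw [harg2, harg3]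
    _ = pu (B/d) * pv * (ps (-c) * ps (-(d/c))) * pu (-(c/d)) := by group
    _ = pu (B/d) * pv * ps ((-c) * -(d/c)) * pu (-(c/d)) := by
          rw [p2 (neg_ne_zero.2 hc) (neg_ne_zero.2 hx)]
    _ = pu (B/d) * (pv * ps d) * pu (-(c/d)) := by rw [harg4]; group
    _ = pu (B/d) * (ps (1/d) * pv) * pu (-(c/d)) := by rw [hC2]
    _ = pu (B/d) * ps (1/d) * pv * pu (-(c/d)) := by group

lemma keyV {a B c d : ℝ} (hdet : a * d - B * c = 1) :
    phi0 (-B) a (-d) c = phi0 a B c d * pv := by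
  by_cases hc : c = 0
  · have had : a * d = 1 := by rw [hc] at hdet; linarith
    have ha : a ≠ 0 := left_ne_zero_of_mul_eq_one had
    have hd : d ≠ 0 := right_ne_zero_of_mul_eq_one had
    have hnd : (-d : ℝ) ≠ 0 := neg_ne_zero.2 hd
    simp only [phi0, if_pos hc, if_neg hnd]
    have e1 : -B / -d = B * a := by
      rw [neg_div_neg_eq]; field_simp; linear_combination (-B) * had
    have e2 : -(1 / -d) = a := by
      field_simp; linear_combination -had
    have e3 : c / -d = 0 := by rw [hc]; simp
    rw [e1, e2, e3, pu0, mul_one]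
    have e4 : ps a * pu (B / a) = pu (B * a) * ps a := by
      rw [p4' ha (B / a)]
      have : B / a * a ^ 2 = B * a := by field_simp
      rw [this]
    rw [e4]
  · by_cases hd : d = 0
    · have hBc : B * c = -1 := by rw [hd] at hdet; linarith
      have hB : -B = 1/c := by field_simp; linear_combination -hBc
      have hc1 : (1/c : ℝ) ≠ 0 := one_div_ne_zero hc
      have hL : phi0 (-B) a (-d) c = pu (a/c) * ps (1/c) := by
        rw [hd, neg_zero, phi0, if_pos rfl, hB]
        have e1 : a / (1/c) = a * c := by field_simp
        rw [e1, p4' hc1 (a * c)]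
        have e2 : a * c * (1/c) ^ 2 = a / c := by field_simp
        rw [e2]
      have hR : phi0 a B c d * pv = pu (a/c) * ps (1/c) := by
        rw [phi0, if_neg hc, hd]
        have e3 : (0 : ℝ) / c = 0 := by simp
        rw [e3, pu0, mul_one]
        have e4 : pu (a/c) * ps (-(1/c)) * pv * pv
            = pu (a/c) * (ps (-(1/c)) * (pv * pv)) := by group
        rw [e4, p3, p2 (neg_ne_zero.2 hc1) (by norm_num : (-1:ℝ) ≠ 0)]
        have e5 : -(1/c) * -1 = 1/c := by ring
        rw [e5]
      rw [hL, hR]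
    · have hnd : (-d : ℝ) ≠ 0 := neg_ne_zero.2 hd
      simp only [phi0, if_neg hnd, if_neg hc]
      have e1 : -B / -d = B / d := neg_div_neg_eq B d
      have e2 : -(1 / -d) = 1 / d := by field_simp
      have e3 : c / -d = -(c/d) := by field_simp
      rw [e1, e2, e3, ← key3 hc hd hdet]

lemma KA (M : SL2) (b : ℝ) : phi (M * Umat b) = phi M * pu b := by
  have e : ((M * Umat b : SL2) : Matrix (Fin 2) (Fin 2) ℝ)
      = !![(M : Matrix (Fin 2) (Fin 2) ℝ) 0 0,
            (M : Matrix (Fin 2) (Fin 2) ℝ) 0 0 * b + (M : Matrix (Fin 2) (Fin 2) ℝ) 0 1;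
          (M : Matrix (Fin 2) (Fin 2) ℝ) 1 0,
            (M : Matrix (Fin 2) (Fin 2) ℝ) 1 0 * b + (M : Matrix (Fin 2) (Fin 2) ℝ) 1 1] := by
    ext i j
    simp only [Matrix.SpecialLinearGroup.coe_mul]
    fin_cases i <;> fin_cases j <;>
      simp [Umat, Matrix.mul_apply, Fin.sum_univ_two]
  rw [phi, e]
  try simp only [Matrix.cons_val', Matrix.cons_val_zero, Matrix.cons_val_one, Matrix.head_cons,
    Matrix.empty_val', Matrix.cons_val_fin_one, Matrix.head_fin_const, Matrix.of_apply]
  exact keyU (detM M) b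

lemma KB (M : SL2) : phi (M * Vmat) = phi M * pv := by
  have e : ((M * Vmat : SL2) : Matrix (Fin 2) (Fin 2) ℝ)
      = !![-(M : Matrix (Fin 2) (Fin 2) ℝ) 0 1, (M : Matrix (Fin 2) (Fin 2) ℝ) 0 0;
          -(M : Matrix (Fin 2) (Fin 2) ℝ) 1 1, (M : Matrix (Fin 2) (Fin 2) ℝ) 1 0] := by
    ext i j
    simp only [Matrix.SpecialLinearGroup.coe_mul]
    fin_cases i <;> fin_cases j <;>
      simp [Vmat, Matrix.mul_apply, Fin.sum_univ_two]
  rw [phi, e]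
  try simp only [Matrix.cons_val', Matrix.cons_val_zero, Matrix.cons_val_one, Matrix.head_cons,
    Matrix.empty_val', Matrix.cons_val_fin_one, Matrix.head_fin_const, Matrix.of_apply]
  exact keyV (detM M)

lemma phi_mul (w : FreeGroup (ℝ ⊕ Unit)) :
    ∀ M : SL2, phi (M * F (PresentedGroup.mk relsSL w)) = phi M * PresentedGroup.mk relsSL w := by
  induction w using FreeGroup.induction_on with
  | C1 => intro M; simp
  | of x =>
    intro M
    have h1 : F (PresentedGroup.mk relsSL (FreeGroup.of x)) = Fgen x :=
      PresentedGroup.toGroup.of hrels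
    rw [h1]
    cases x with
    | inl b => exact KA M b
    | inr u => exact KB M
  | inv_of x _ =>
    intro M
    have h1 : F (PresentedGroup.mk relsSL (FreeGroup.of x)) = Fgen x :=
      PresentedGroup.toGroup.of hrels
    rw [map_inv, map_inv, h1]
    cases x with
    | inl b =>
      show phi (M * (Umat b)⁻¹) = phi M * (pu b)⁻¹
      rw [LUinv, puinv]
      exact KA M (-b)
    | inr u =>
      show phi (M * Vmat⁻¹) = phi M * pv⁻¹
      rw [LVinv, pvinv']
      have e : M * (Vmat * Vmat * Vmat) = M * Vmat * Vmat * Vmat := by group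
      rw [e, KB, KB, KB]
      group
  | mul x y ihx ihy =>
    intro M
    rw [map_mul, map_mul, ← mul_assoc, ihy (M * F (PresentedGroup.mk relsSL x)), ihx M,
      mul_assoc]

lemma phi_one : phi 1 = 1 := by
  have h0 : ((1 : SL2) : Matrix (Fin 2) (Fin 2) ℝ) = 1 := rfl
  rw [phi, h0]
  have e10 : (1 : Matrix (Fin 2) (Fin 2) ℝ) 1 0 = 0 := by
    norm_num [Matrix.one_apply]
  have e00 : (1 : Matrix (Fin 2) (Fin 2) ℝ) 0 0 = 1 := by
    norm_num [Matrix.one_apply]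
  have e01 : (1 : Matrix (Fin 2) (Fin 2) ℝ) 0 1 = 0 := by
    norm_num [Matrix.one_apply]
  rw [e10, e00, e01, phi0, if_pos rfl]
  simp [ps1, pu0]

lemma phi_F (g : P) : phi (F g) = g :=
  PresentedGroup.induction_on (C := fun g => phi (F g) = g) g
    (fun w => by simpa [phi_one] using phi_mul w 1)

lemma F_phi (M : SL2) : F (phi M) = M := by
  by_cases hc : (M : Matrix (Fin 2) (Fin 2) ℝ) 1 0 = 0
  · have hdet := detM M
    rw [hc] at hdet
    have had : (M : Matrix (Fin 2) (Fin 2) ℝ) 0 0 * (M : Matrix (Fin 2) (Fin 2) ℝ) 1 1 = 1 := by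
      linarith
    have ha : (M : Matrix (Fin 2) (Fin 2) ℝ) 0 0 ≠ 0 := left_ne_zero_of_mul_eq_one had
    rw [phi, phi0, if_pos hc, map_mul, F_ps ha, F_pu]
    exact decomp_eq M hc
  · rw [phi, phi0, if_neg hc]
    simp only [map_mul, F_pu, F_pv, F_ps (neg_ne_zero.2 (one_div_ne_zero hc))]
    exact decomp_ne M hc

end SL2Weil

/-- The presented group `⟨ℝ ⊕ Unit | SL1 ∪ SL2 ∪ SL3 ∪ SL4⟩` is isomorphic to `SL₂(ℝ)`,
via the homomorphism induced by `u(b) ↦ U(b)` and `v ↦ V`. -/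
theorem presentedGroup_iso_SL2 :
    ∃ e : PresentedGroup relsSL ≃* Matrix.SpecialLinearGroup (Fin 2) ℝ,
      (∀ b : ℝ, e (PresentedGroup.of (Sum.inl b)) = Umat b) ∧
        e (PresentedGroup.of (Sum.inr ())) = Vmat := by
  refine ⟨MulEquiv.mk ⟨SL2Weil.F, SL2Weil.phi, SL2Weil.phi_F, SL2Weil.F_phi⟩
      (map_mul SL2Weil.F), fun b => SL2Weil.F_pu b, SL2Weil.F_pv⟩
end

section
/- Let the generator set be {(p,q) ∈ ℤ × ℤ : q ≠ 0} (write x_{(p,q)} for the corresponding generator) and let the relator set be R := {x_{(p,q)} · x_{(a,b)} · x_{(p·b + a·q, q·b)}^{-1} : p, q, a, b ∈ ℤ, q ≠ 0, b ≠ 0} ∪ {x_{(p,q)} · x_{(n·p, n·q)}^{-1} : p, q, n ∈ ℤ, q ≠ 0, n ≠ 0}. Then the presented group on these generators and relators is isomorphic to the additive group of rational numbers (Multiplicative ℚ), via the homomorphism induced by x_{(p,q)} ↦ p/q. -/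
/-- The generating set `{(p,q) ∈ ℤ × ℤ : q ≠ 0}`. -/
abbrev GenQ : Type := {p : ℤ × ℤ // p.2 ≠ 0}

/-- The relator set: `x_{(p,q)}·x_{(a,b)}·x_{(pb+aq, qb)}⁻¹` for `q,b ≠ 0`, together
with `x_{(p,q)}·x_{(np,nq)}⁻¹` for `q,n ≠ 0`. -/
def relsQ2 : Set (FreeGroup GenQ) :=
  {g | ∃ (p q a b : ℤ) (hq : q ≠ 0) (hb : b ≠ 0),
    g = FreeGroup.of (⟨(p, q), hq⟩ : GenQ) * FreeGroup.of (⟨(a, b), hb⟩ : GenQ) *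
          (FreeGroup.of (⟨(p * b + a * q, q * b), mul_ne_zero hq hb⟩ : GenQ))⁻¹} ∪
  {g | ∃ (p q n : ℤ) (hq : q ≠ 0) (hn : n ≠ 0),
    g = FreeGroup.of (⟨(p, q), hq⟩ : GenQ) *
          (FreeGroup.of (⟨(n * p, n * q), mul_ne_zero hn hq⟩ : GenQ))⁻¹}

namespace RelsQ2Aux

lemma mk_rel_one {r : FreeGroup GenQ} (hr : r ∈ relsQ2) :
    PresentedGroup.mk relsQ2 r = 1 :=
  (QuotientGroup.eq_one_iff r).2 (Subgroup.subset_normalClosure hr)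

lemma rel_mul (p q a b : ℤ) (hq : q ≠ 0) (hb : b ≠ 0) :
    (PresentedGroup.of ⟨(p, q), hq⟩ : PresentedGroup relsQ2) *
      PresentedGroup.of ⟨(a, b), hb⟩ =
      PresentedGroup.of ⟨(p * b + a * q, q * b), mul_ne_zero hq hb⟩ := by
  have h := mk_rel_one (Or.inl ⟨p, q, a, b, hq, hb, rfl⟩)
  rw [map_mul, map_mul, map_inv, mul_inv_eq_one] at h
  exact h

lemma rel_scale (p q n : ℤ) (hq : q ≠ 0) (hn : n ≠ 0) :
    (PresentedGroup.of ⟨(p, q), hq⟩ : PresentedGroup relsQ2) =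
      PresentedGroup.of ⟨(n * p, n * q), mul_ne_zero hn hq⟩ := by
  have h := mk_rel_one (Or.inr ⟨p, q, n, hq, hn, rfl⟩)
  rw [map_mul, map_inv, mul_inv_eq_one] at h
  exact h

lemma of_eq (p q a b : ℤ) (hq : q ≠ 0) (hb : b ≠ 0) (h : p * b = a * q) :
    (PresentedGroup.of ⟨(p, q), hq⟩ : PresentedGroup relsQ2) =
      PresentedGroup.of ⟨(a, b), hb⟩ := by
  rw [rel_scale p q b hq hb, rel_scale a b q hb hq]
  congr 1
  refine Subtype.ext (Prod.ext ?_ (mul_comm b q))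
  rw [mul_comm b p, h, mul_comm a q]

lemma of_zero_one : (PresentedGroup.of ⟨(0, 1), one_ne_zero⟩ : PresentedGroup relsQ2) = 1 := by
  have h := rel_mul 0 1 0 1 one_ne_zero one_ne_zero
  have h2 : (PresentedGroup.of ⟨(0 * 1 + 0 * 1, 1 * 1), mul_ne_zero one_ne_zero one_ne_zero⟩ :
      PresentedGroup relsQ2) = PresentedGroup.of ⟨(0, 1), one_ne_zero⟩ := by
    congr 1
  rw [h2] at h
  exact mul_right_cancel (h.trans (one_mul _).symm)

lemma num_eq (x : ℚ) : (x.num : ℚ) = x * x.den := by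
  have hden : ((x.den : ℚ)) ≠ 0 := by exact_mod_cast x.den_ne_zero
  exact (div_eq_iff hden).1 (Rat.num_div_den x)

lemma den_ne (x : ℚ) : (x.den : ℤ) ≠ 0 := by exact_mod_cast x.den_ne_zero

/-- the map `ℚ → PresentedGroup relsQ2`, `r ↦ of (r.num, r.den)`, as a monoid hom. -/
noncomputable def ψ : Multiplicative ℚ →* PresentedGroup relsQ2 where
  toFun r := PresentedGroup.of ⟨((Multiplicative.toAdd r).num,
      ((Multiplicative.toAdd r).den : ℤ)), den_ne _⟩
  map_one' := by
    refine (of_eq _ _ 0 1 (den_ne _) one_ne_zero ?_).trans of_zero_one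
    simp
  map_mul' r s := by
    set x := Multiplicative.toAdd r with hx
    set y := Multiplicative.toAdd s with hy
    have htoadd : Multiplicative.toAdd (r * s) = x + y := rfl
    rw [rel_mul]
    refine of_eq _ _ _ _ (den_ne _) (mul_ne_zero (den_ne x) (den_ne y)) ?_
    have key : ((x + y).num : ℚ) * ((x.den : ℚ) * y.den) =
        ((x.num : ℚ) * y.den + (y.num : ℚ) * x.den) * ((x + y).den : ℚ) := by
      rw [num_eq, num_eq, num_eq]
      ring
    rw [htoadd]
    exact_mod_cast key

lemma lift_rels : ∀ r ∈ relsQ2, FreeGroup.lift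
    (fun p : GenQ => Multiplicative.ofAdd ((p.1.1 : ℚ) / (p.1.2 : ℚ))) r = 1 := by
  rintro r (⟨p, q, a, b, hq, hb, rfl⟩ | ⟨p, q, n, hq, hn, rfl⟩)
  · simp only [map_mul, map_inv, FreeGroup.lift_apply_of, mul_inv_eq_one]
    rw [← ofAdd_add]
    congr 1
    have hq' : (q : ℚ) ≠ 0 := by exact_mod_cast hq
    have hb' : (b : ℚ) ≠ 0 := by exact_mod_cast hb
    push_cast
    field_simp
  · simp only [map_mul, map_inv, FreeGroup.lift_apply_of, mul_inv_eq_one]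
    congr 1
    have hq' : (q : ℚ) ≠ 0 := by exact_mod_cast hq
    have hn' : (n : ℚ) ≠ 0 := by exact_mod_cast hn
    push_cast
    rw [mul_div_mul_left _ _ hn']

end RelsQ2Aux

/-- The presented group on the generators `x_{(p,q)}` (`q ≠ 0`) with the above
relators is isomorphic to the additive group of rationals, via the homomorphism
induced by `x_{(p,q)} ↦ p/q`. -/
theorem presentedGroup_fractions_iso_rat :
    ∃ e : PresentedGroup relsQ2 ≃* Multiplicative ℚ,
      ∀ p : GenQ,
        e (PresentedGroup.of p) = Multiplicative.ofAdd ((p.1.1 : ℚ) / (p.1.2 : ℚ)) := by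
  classical
  open RelsQ2Aux in
  let φ : PresentedGroup relsQ2 →* Multiplicative ℚ := PresentedGroup.toGroup lift_rels
  have hφ : ∀ p : GenQ, φ (PresentedGroup.of p) =
      Multiplicative.ofAdd ((p.1.1 : ℚ) / (p.1.2 : ℚ)) := fun p => PresentedGroup.toGroup.of _
  have hψφ : (RelsQ2Aux.ψ).comp φ = MonoidHom.id _ := by
    ext x
    rcases x with ⟨⟨p, q⟩, hq⟩
    simp only [MonoidHom.comp_apply, MonoidHom.id_apply, hφ]
    show PresentedGroup.of _ = PresentedGroup.of _
    set z : ℚ := (p : ℚ) / (q : ℚ) with hz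
    have htoadd : Multiplicative.toAdd (Multiplicative.ofAdd z) = z := rfl
    refine RelsQ2Aux.of_eq _ _ p q (RelsQ2Aux.den_ne _) hq ?_
    have hq' : (q : ℚ) ≠ 0 := by exact_mod_cast hq
    have key : (z.num : ℚ) * q = (p : ℚ) * (z.den : ℚ) := by
      rw [RelsQ2Aux.num_eq, hz]
      field_simp
    exact_mod_cast key
  have hφψ : φ.comp RelsQ2Aux.ψ = MonoidHom.id _ := by
    ext r
    show φ (RelsQ2Aux.ψ r) = r
    show φ (PresentedGroup.of _) = r
    rw [hφ]
    show Multiplicative.ofAdd ((((Multiplicative.toAdd r).num : ℚ)) /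
        (((Multiplicative.toAdd r).den : ℚ))) = r
    rw [Rat.num_div_den]
    rfl
  exact ⟨MonoidHom.toMulEquiv φ RelsQ2Aux.ψ hψφ hφψ, hφ⟩
end

section
/- Let P : ℝ → ℚ be a ℚ-linear map (viewing ℝ as a vector space over ℚ) with P(1) = 1. Let the generator set be ℝ (write x_t for the generator indexed by t ∈ ℝ) and let the relator set be R := {x_t · x_s · x_{t+s}^{-1} : t, s ∈ ℝ} ∪ {x_t · x_{(P(t) : ℝ)}^{-1} : t ∈ ℝ}, where (P(t) : ℝ) denotes the rational number P(t) regarded as a real number. Then the presented group ⟨ℝ | R⟩ is isomorphic to the additive group of rational numbers (Multiplicative ℚ), via the homomorphism induced by x_t ↦ P(t). -/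
/-- The relator set `R = {x_t·x_s·x_{t+s}⁻¹ : t,s ∈ ℝ} ∪ {x_t·x_{P(t)}⁻¹ : t ∈ ℝ}`
determined by a `ℚ`-linear projection `P : ℝ → ℚ`. -/
def relsP (P : ℝ →ₗ[ℚ] ℚ) : Set (FreeGroup ℝ) :=
  {g | ∃ t s : ℝ, g = FreeGroup.of t * FreeGroup.of s * (FreeGroup.of (t + s))⁻¹} ∪
  {g | ∃ t : ℝ, g = FreeGroup.of t * (FreeGroup.of ((P t : ℝ)))⁻¹}

lemma relsP_one (P : ℝ →ₗ[ℚ] ℚ) {r : FreeGroup ℝ} (hr : r ∈ relsP P) :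
    (QuotientGroup.mk r : PresentedGroup (relsP P)) = 1 := by
  have : r ∈ Subgroup.normalClosure (relsP P) := Subgroup.subset_normalClosure hr
  exact (QuotientGroup.eq_one_iff r).mpr this

lemma of_add (P : ℝ →ₗ[ℚ] ℚ) (t s : ℝ) :
    (PresentedGroup.of (rels := relsP P) (t + s)) =
      PresentedGroup.of t * PresentedGroup.of s := by
  have h := relsP_one P (Or.inl ⟨t, s, rfl⟩)
  simp only [QuotientGroup.mk_mul, QuotientGroup.mk_inv, mul_inv_eq_one] at h
  exact h.symm

lemma of_proj (P : ℝ →ₗ[ℚ] ℚ) (t : ℝ) :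
    (PresentedGroup.of (rels := relsP P) t) = PresentedGroup.of ((P t : ℝ)) := by
  have h := relsP_one P (Or.inr ⟨t, rfl⟩)
  simp only [QuotientGroup.mk_mul, QuotientGroup.mk_inv, mul_inv_eq_one] at h
  exact h

lemma P_rat (P : ℝ →ₗ[ℚ] ℚ) (hP : P 1 = 1) (q : ℚ) : P (q : ℝ) = q := by
  have : ((q : ℝ)) = q • (1 : ℝ) := by simp [Rat.smul_one_eq_cast]
  rw [this, map_smul, hP, smul_eq_mul, mul_one]

/-- For a `ℚ`-linear map `P : ℝ → ℚ` with `P 1 = 1`, the presented group `⟨ℝ | R⟩`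
is isomorphic to the additive group of rationals, via the homomorphism induced by
`x_t ↦ P(t)`. -/
theorem presentedGroup_proj_iso_rat (P : ℝ →ₗ[ℚ] ℚ) (hP : P 1 = 1) :
    ∃ e : PresentedGroup (relsP P) ≃* Multiplicative ℚ,
      ∀ t : ℝ, e (PresentedGroup.of t) = Multiplicative.ofAdd (P t) := by
  have hrel : ∀ r ∈ relsP P, FreeGroup.lift
      (fun t : ℝ => Multiplicative.ofAdd (P t)) r = 1 := by
    rintro r (⟨t, s, rfl⟩ | ⟨t, rfl⟩) <;>
      simp [← ofAdd_add, P_rat P hP]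
  let f : PresentedGroup (relsP P) →* Multiplicative ℚ := PresentedGroup.toGroup hrel
  let g : Multiplicative ℚ →* PresentedGroup (relsP P) :=
    MonoidHom.mk' (fun q => PresentedGroup.of ((Multiplicative.toAdd q : ℚ) : ℝ))
      (fun q r => by
        simp only [toAdd_mul]
        push_cast
        exact of_add P _ _)
  have hgf : g.comp f = MonoidHom.id _ := by
    ext t
    simp only [MonoidHom.comp_apply, MonoidHom.id_apply]
    have : f (PresentedGroup.of t) = Multiplicative.ofAdd (P t) :=
      PresentedGroup.toGroup.of hrel
    rw [this]
    show PresentedGroup.of ((P t : ℝ)) = PresentedGroup.of t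
    exact (of_proj P t).symm
  have hfg : f.comp g = MonoidHom.id _ := by
    refine MonoidHom.ext fun q => ?_
    simp only [MonoidHom.comp_apply, MonoidHom.id_apply]
    show f (PresentedGroup.of ((Multiplicative.toAdd q : ℚ) : ℝ)) = q
    have : f (PresentedGroup.of ((Multiplicative.toAdd q : ℚ) : ℝ)) =
        Multiplicative.ofAdd (P ((Multiplicative.toAdd q : ℚ) : ℝ)) :=
      PresentedGroup.toGroup.of hrel
    rw [this, P_rat P hP]
    rfl
  refine ⟨MonoidHom.toMulEquiv f g hgf hfg, fun t => ?_⟩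
  exact PresentedGroup.toGroup.of hrel
end

section
/- Let the generator set be ℝ (write x_r for the generator indexed by r ∈ ℝ) and let the relator set be R := {x_{n·r} · x_r^{-1} : r ∈ ℝ, n ∈ ℕ, n ≥ 1} ∪ {x_{r+k} · x_r^{-1} : r ∈ ℝ, k ∈ ℤ} (identifying x_{n·r} with x_r and x_{r+k} with x_r). Then in the presented group ⟨ℝ | R⟩, the image of the generator x_r equals the image of the generator x_0 if and only if r is rational. -/
/-- The relator set `R = {x_{n·r}·x_r⁻¹ : r ∈ ℝ, 1 ≤ n ∈ ℕ} ∪ {x_{r+k}·x_r⁻¹ : r ∈ ℝ, k ∈ ℤ}`. -/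
def relsRat : Set (FreeGroup ℝ) :=
  {g | ∃ (r : ℝ) (n : ℕ), 1 ≤ n ∧ g = FreeGroup.of ((n : ℝ) * r) * (FreeGroup.of r)⁻¹} ∪
  {g | ∃ (r : ℝ) (k : ℤ), g = FreeGroup.of (r + (k : ℝ)) * (FreeGroup.of r)⁻¹}

lemma relsRat_eq {a b : ℝ} (h : FreeGroup.of a * (FreeGroup.of b)⁻¹ ∈ relsRat) :
    PresentedGroup.of (rels := relsRat) a = PresentedGroup.of b := by
  symm
  apply QuotientGroup.eq.mpr
  have h1 : FreeGroup.of a * (FreeGroup.of b)⁻¹ ∈ Subgroup.normalClosure relsRat :=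
    Subgroup.subset_normalClosure h
  have h2 := (Subgroup.normalClosure_normal (s := relsRat)).conj_mem _ h1
    ((FreeGroup.of b)⁻¹)
  simpa [mul_assoc] using h2

open Classical in
noncomputable def ratDetect : ℝ → Multiplicative (ZMod 2) := fun r =>
  if r ∈ Set.range ((↑) : ℚ → ℝ) then 1 else Multiplicative.ofAdd 1

lemma ratDetect_congr {a b : ℝ}
    (h : a ∈ Set.range ((↑) : ℚ → ℝ) ↔ b ∈ Set.range ((↑) : ℚ → ℝ)) :
    ratDetect a = ratDetect b := by
  unfold ratDetect
  by_cases hb : b ∈ Set.range ((↑) : ℚ → ℝ)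
  · simp [hb, h.mpr hb]
  · rw [if_neg (fun ha => hb (h.mp ha)), if_neg hb]

lemma ratDetect_rels : ∀ g ∈ relsRat, FreeGroup.lift ratDetect g = 1 := by
  rintro g (⟨s, n, hn, rfl⟩ | ⟨s, k, rfl⟩) <;> simp only [map_mul, map_inv, FreeGroup.lift_apply_of]
  · rw [ratDetect_congr (a := (n : ℝ) * s) (b := s), mul_inv_cancel]
    constructor
    · rintro ⟨q, hq⟩
      refine ⟨q / n, ?_⟩
      have hn' : (n : ℝ) ≠ 0 := by positivity
      push_cast
      field_simp
      linarith [hq]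
    · rintro ⟨q, rfl⟩
      exact ⟨n * q, by push_cast; ring⟩
  · rw [ratDetect_congr (a := s + (k : ℝ)) (b := s), mul_inv_cancel]
    constructor
    · rintro ⟨q, hq⟩
      exact ⟨q - k, by push_cast; linarith⟩
    · rintro ⟨q, rfl⟩
      exact ⟨q + k, by push_cast; ring⟩

/-- In the presented group `⟨ℝ | R⟩`, the image of the generator `x_r` equals the image
of the generator `x_0` if and only if `r` is rational. -/
theorem of_eq_of_zero_iff_rational (r : ℝ) :
    (PresentedGroup.of (rels := relsRat) r = PresentedGroup.of 0) ↔
      r ∈ Set.range ((↑) : ℚ → ℝ) := by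
  constructor
  · intro h
    by_contra hr
    have := congrArg (PresentedGroup.toGroup ratDetect_rels) h
    rw [PresentedGroup.toGroup.of, PresentedGroup.toGroup.of] at this
    have h0 : (0 : ℝ) ∈ Set.range ((↑) : ℚ → ℝ) := ⟨0, by norm_num⟩
    unfold ratDetect at this
    rw [if_neg hr, if_pos h0] at this
    exact absurd (congrArg Multiplicative.toAdd this) (by decide)
  · rintro ⟨q, rfl⟩
    have h1 : PresentedGroup.of (rels := relsRat) (q : ℝ) =
        PresentedGroup.of ((q.num : ℝ)) := by
      have hden : ((q.den : ℝ)) * (q : ℝ) = (q.num : ℝ) := by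
        rw [mul_comm]
        exact_mod_cast Rat.mul_den_eq_num q
      have : FreeGroup.of ((q.den : ℝ) * (q : ℝ)) * (FreeGroup.of ((q : ℝ)))⁻¹ ∈ relsRat :=
        Or.inl ⟨(q : ℝ), q.den, q.pos, rfl⟩
      rw [hden] at this
      exact (relsRat_eq this).symm
    have h2 : PresentedGroup.of (rels := relsRat) ((q.num : ℝ)) =
        PresentedGroup.of 0 := by
      have : FreeGroup.of ((0 : ℝ) + (q.num : ℝ)) * (FreeGroup.of (0 : ℝ))⁻¹ ∈ relsRat :=
        Or.inr ⟨0, q.num, rfl⟩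
      rw [zero_add] at this
      exact relsRat_eq this
    exact h1.trans h2
end

section
/- Fix natural numbers D ≥ 1 and i with 1 ≤ i ≤ D, and a real number α. Let W be the subgroup of FreeGroup(X) generated by {w_r : r ∈ ℝ^D, r_i = α}, and let L be the subgroup of C generated by π(w_{(0,…,0,α,0,…,0)}) (the tuple with α in position i and 0 elsewhere) together with the images in C of all generators a_{(ℓ,s)} with s ∈ ℝ and ℓ ∈ ℕ, ℓ ≠ i. Then the preimage of L under π (Subgroup.comap π L) equals W. -/
/-- The generating set `X = {x_{(i,s)} : i ∈ ℕ, s ∈ ℝ} ∪ {y}`. -/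
abbrev XT : Type := (ℕ × ℝ) ⊕ Unit

/-- Generators of the presented group `C`: the generators of `X`, together with the
stable letters `a_{(i,t)}` (`i ∈ ℕ`, `t ∈ ℝ`) and `m_{(i,t)}` (`i ∈ ℕ`, `t ≠ 0`). -/
abbrev GenC : Type := XT ⊕ ((ℕ × ℝ) ⊕ (ℕ × {t : ℝ // t ≠ 0}))

def xc (p : ℕ × ℝ) : FreeGroup GenC := FreeGroup.of (Sum.inl (Sum.inl p))
def yc : FreeGroup GenC := FreeGroup.of (Sum.inl (Sum.inr ()))
def ac (p : ℕ × ℝ) : FreeGroup GenC := FreeGroup.of (Sum.inr (Sum.inl p))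
def mcg (i : ℕ) (t : {t : ℝ // t ≠ 0}) : FreeGroup GenC :=
  FreeGroup.of (Sum.inr (Sum.inr (i, t)))

/-- The relators of `C`: `a_{(i,t)}` conjugates `x_{(i,s)}` to `x_{(i,s+t)}` and
commutes with the remaining generators of `X`; `m_{(i,t)}` (`t ≠ 0`) conjugates
`x_{(i,s)}` to `x_{(i,s·t)}` and commutes with the remaining generators of `X`. -/
def relsC : Set (FreeGroup GenC) :=
  {g | ∃ (i : ℕ) (s t : ℝ), g = ac (i, t) * xc (i, s) * (ac (i, t))⁻¹ * (xc (i, s + t))⁻¹} ∪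
  {g | ∃ (i j : ℕ) (s t : ℝ), j ≠ i ∧
        g = ac (i, t) * xc (j, s) * (ac (i, t))⁻¹ * (xc (j, s))⁻¹} ∪
  {g | ∃ (i : ℕ) (t : ℝ), g = ac (i, t) * yc * (ac (i, t))⁻¹ * yc⁻¹} ∪
  {g | ∃ (i : ℕ) (s : ℝ) (t : {t : ℝ // t ≠ 0}),
        g = mcg i t * xc (i, s) * (mcg i t)⁻¹ * (xc (i, s * t.1))⁻¹} ∪
  {g | ∃ (i j : ℕ) (s : ℝ) (t : {t : ℝ // t ≠ 0}), j ≠ i ∧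
        g = mcg i t * xc (j, s) * (mcg i t)⁻¹ * (xc (j, s))⁻¹} ∪
  {g | ∃ (i : ℕ) (t : {t : ℝ // t ≠ 0}), g = mcg i t * yc * (mcg i t)⁻¹ * yc⁻¹}

/-- The presented group `C`. -/
abbrev Cgrp : Type := PresentedGroup relsC

/-- The homomorphism `π : FreeGroup X →* C` induced by the inclusion of generators. -/
noncomputable def piC : FreeGroup XT →* Cgrp :=
  FreeGroup.lift fun g => PresentedGroup.of (Sum.inl g)

/-- The image in `C` of the stable letter `a_{(i,t)}`. -/
def aC (p : ℕ × ℝ) : Cgrp := PresentedGroup.of (Sum.inr (Sum.inl p))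

def xX (p : ℕ × ℝ) : FreeGroup XT := FreeGroup.of (Sum.inl p)
def yX : FreeGroup XT := FreeGroup.of (Sum.inr ())

/-- The word `x_{(1,r_1)} ⋯ x_{(D,r_D)}` for a tuple `r ∈ ℝ^D`. -/
def cD {D : ℕ} (r : Fin D → ℝ) : FreeGroup XT :=
  (List.ofFn fun i : Fin D => xX ((i : ℕ) + 1, r i)).prod

/-- The word `w_r = x_{(D,r_D)}⁻¹ ⋯ x_{(1,r_1)}⁻¹ · y · x_{(1,r_1)} ⋯ x_{(D,r_D)}`. -/
def wD {D : ℕ} (r : Fin D → ℝ) : FreeGroup XT := (cD r)⁻¹ * yX * cD r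

/-! ### Auxiliary development -/

abbrev BT : Type := (ℕ × ℝ) ⊕ (ℕ × {t : ℝ // t ≠ 0})

/-- The permutation of `XT` associated to a stable letter. -/
noncomputable def perm0 : BT → Equiv.Perm XT
  | Sum.inl (ℓ, t) =>
    { toFun := Sum.map (fun p => (p.1, if p.1 = ℓ then p.2 + t else p.2)) id
      invFun := Sum.map (fun p => (p.1, if p.1 = ℓ then p.2 - t else p.2)) id
      left_inv := by rintro (⟨j, s⟩ | ⟨⟩) <;> simp [Sum.map] <;> split_ifs <;> ring_nf
      right_inv := by rintro (⟨j, s⟩ | ⟨⟩) <;> simp [Sum.map] <;> split_ifs <;> ring_nf }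
  | Sum.inr (ℓ, t) =>
    { toFun := Sum.map (fun p => (p.1, if p.1 = ℓ then p.2 * t.1 else p.2)) id
      invFun := Sum.map (fun p => (p.1, if p.1 = ℓ then p.2 / t.1 else p.2)) id
      left_inv := by
        rintro (⟨j, s⟩ | ⟨⟩) <;> simp [Sum.map] <;> split_ifs <;>
          first | rfl | exact mul_div_cancel_right₀ s t.2
      right_inv := by
        rintro (⟨j, s⟩ | ⟨⟩) <;> simp [Sum.map] <;> split_ifs <;>
          first | rfl | exact div_mul_cancel₀ s t.2 }

noncomputable def phiA : FreeGroup BT →* MulAut (FreeGroup XT) :=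
  FreeGroup.lift fun b => FreeGroup.freeGroupCongr (perm0 b)

abbrev HT := SemidirectProduct (FreeGroup XT) (FreeGroup BT) phiA

open SemidirectProduct in
noncomputable def fgen : GenC → HT :=
  Sum.elim (fun x => SemidirectProduct.inl (FreeGroup.of x))
    (fun b => SemidirectProduct.inr (FreeGroup.of b))

lemma phiA_of (b : BT) : phiA (FreeGroup.of b) = FreeGroup.freeGroupCongr (perm0 b) :=
  FreeGroup.lift_apply_of

lemma lift_fgen_conj (b : BT) (x x' : XT) (h : perm0 b x = x') :
    FreeGroup.lift fgen
      (FreeGroup.of (Sum.inr b) * FreeGroup.of (Sum.inl x) *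
        (FreeGroup.of (Sum.inr b))⁻¹ * (FreeGroup.of (Sum.inl x'))⁻¹) = 1 := by
  have key : (SemidirectProduct.inr (FreeGroup.of b) * SemidirectProduct.inl (FreeGroup.of x) *
      SemidirectProduct.inr (FreeGroup.of b)⁻¹ : HT) =
      SemidirectProduct.inl (FreeGroup.of x') := by
    rw [← SemidirectProduct.inl_aut, phiA_of, FreeGroup.freeGroupCongr_apply,
      FreeGroup.map.of, h]
  simp only [map_mul, map_inv, FreeGroup.lift_apply_of, fgen, Sum.elim_inl, Sum.elim_inr]
  rw [show (SemidirectProduct.inr (FreeGroup.of b) : HT)⁻¹ =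
      SemidirectProduct.inr ((FreeGroup.of b)⁻¹) from (map_inv _ _).symm, key]
  simp


noncomputable def psiC : Cgrp →* HT :=
  PresentedGroup.toGroup (f := fgen) (by
    rintro ρ (((((⟨ℓ, s, t, rfl⟩ | ⟨ℓ, j, s, t, hj, rfl⟩) | ⟨ℓ, t, rfl⟩) |
        ⟨ℓ, s, t, rfl⟩) | ⟨ℓ, j, s, t, hj, rfl⟩) | ⟨ℓ, t, rfl⟩)
    · exact lift_fgen_conj (Sum.inl (ℓ, t)) (Sum.inl (ℓ, s)) (Sum.inl (ℓ, s + t))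
        (by simp [perm0])
    · exact lift_fgen_conj (Sum.inl (ℓ, t)) (Sum.inl (j, s)) (Sum.inl (j, s))
        (by simp [perm0, hj])
    · exact lift_fgen_conj (Sum.inl (ℓ, t)) (Sum.inr ()) (Sum.inr ()) (by simp [perm0])
    · exact lift_fgen_conj (Sum.inr (ℓ, t)) (Sum.inl (ℓ, s)) (Sum.inl (ℓ, s * t.1))
        (by simp [perm0])
    · exact lift_fgen_conj (Sum.inr (ℓ, t)) (Sum.inl (j, s)) (Sum.inl (j, s))
        (by simp [perm0, hj])
    · exact lift_fgen_conj (Sum.inr (ℓ, t)) (Sum.inr ()) (Sum.inr ()) (by simp [perm0]))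

lemma psiC_piC (u : FreeGroup XT) : psiC (piC u) = SemidirectProduct.inl u := by
  have : psiC.comp piC = SemidirectProduct.inl := by
    apply FreeGroup.ext_hom
    intro x
    simp [piC, psiC, fgen]
  exact congrFun (congrArg (fun f => f.toFun) this) u

lemma shift_cD (ℓ : ℕ) (t : ℝ) {D : ℕ} (r : Fin D → ℝ) :
    FreeGroup.freeGroupCongr (perm0 (Sum.inl (ℓ, t))) (cD r) =
      cD (fun j => if (j : ℕ) + 1 = ℓ then r j + t else r j) := by
  unfold cD
  rw [map_list_prod, List.map_ofFn]
  congr 1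

lemma shift_wD (ℓ : ℕ) (t : ℝ) {D : ℕ} (r : Fin D → ℝ) :
    FreeGroup.freeGroupCongr (perm0 (Sum.inl (ℓ, t))) (wD r) =
      wD (fun j => if (j : ℕ) + 1 = ℓ then r j + t else r j) := by
  unfold wD
  rw [map_mul, map_mul, map_inv, shift_cD]
  congr 2

lemma mk_rel_eq_one {ρ : FreeGroup GenC} (h : ρ ∈ relsC) :
    PresentedGroup.mk relsC ρ = 1 :=
  (QuotientGroup.eq_one_iff ρ).2 (Subgroup.subset_normalClosure h)

lemma aC_conj (ℓ : ℕ) (t : ℝ) (x : XT) :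
    aC (ℓ, t) * piC (FreeGroup.of x) * (aC (ℓ, t))⁻¹ =
      piC (FreeGroup.of (perm0 (Sum.inl (ℓ, t)) x)) := by
  have hx : ∀ x : XT, piC (FreeGroup.of x) =
      PresentedGroup.mk relsC (FreeGroup.of (Sum.inl x)) := by
    intro x; simp [piC]; rfl
  have ha : aC (ℓ, t) = PresentedGroup.mk relsC (ac (ℓ, t)) := rfl
  obtain (⟨j, s⟩ | ⟨⟩) := x
  · by_cases hj : j = ℓ
    · subst hj
      have h1 := mk_rel_eq_one (ρ := ac (j, t) * xc (j, s) * (ac (j, t))⁻¹ * (xc (j, s + t))⁻¹)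
        (Or.inl (Or.inl (Or.inl (Or.inl (Or.inl ⟨j, s, t, rfl⟩)))))
      simp only [map_mul, map_inv] at h1
      have h2 := mul_inv_eq_one.mp h1
      rw [hx, ha]
      rw [show (FreeGroup.of (Sum.inl (Sum.inl (j, s))) : FreeGroup GenC) = xc (j, s) from rfl, h2]
      simp [perm0, xc]
      exact (hx _).symm
    · have h1 := mk_rel_eq_one (ρ := ac (ℓ, t) * xc (j, s) * (ac (ℓ, t))⁻¹ * (xc (j, s))⁻¹)
        (Or.inl (Or.inl (Or.inl (Or.inl (Or.inr ⟨ℓ, j, s, t, hj, rfl⟩)))))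
      simp only [map_mul, map_inv] at h1
      have h2 := mul_inv_eq_one.mp h1
      rw [hx, ha]
      rw [show (FreeGroup.of (Sum.inl (Sum.inl (j, s))) : FreeGroup GenC) = xc (j, s) from rfl, h2]
      simp [perm0, xc, hj]
      exact (hx _).symm
  · have h1 := mk_rel_eq_one (ρ := ac (ℓ, t) * yc * (ac (ℓ, t))⁻¹ * yc⁻¹)
      (Or.inl (Or.inl (Or.inl (Or.inr ⟨ℓ, t, rfl⟩))))
    simp only [map_mul, map_inv] at h1
    have h2 := mul_inv_eq_one.mp h1
    rw [hx, ha]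
    rw [show (FreeGroup.of (Sum.inl (Sum.inr ())) : FreeGroup GenC) = yc from rfl, h2]
    simp [perm0, yc]
    exact (hx _).symm

lemma aC_conj_word (ℓ : ℕ) (t : ℝ) (u : FreeGroup XT) :
    aC (ℓ, t) * piC u * (aC (ℓ, t))⁻¹ =
      piC (FreeGroup.freeGroupCongr (perm0 (Sum.inl (ℓ, t))) u) := by
  have : ((MulAut.conj (aC (ℓ, t))).toMonoidHom.comp piC : FreeGroup XT →* Cgrp) =
      piC.comp (FreeGroup.freeGroupCongr (perm0 (Sum.inl (ℓ, t)))).toMonoidHom := by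
    apply FreeGroup.ext_hom
    intro x
    simpa [MulAut.conj_apply, mul_assoc] using aC_conj ℓ t x
  have h := congrFun (congrArg (fun f => f.toFun) this) u
  simpa [MulAut.conj_apply, mul_assoc] using h

/-- For the assignment `x_i ← α` (`1 ≤ i ≤ D`): with `W` the subgroup of `FreeGroup X`
generated by `{w_r : r ∈ ℝ^D, r_i = α}` and `L` the subgroup of `C` generated by
`π(w_{(0,…,α,…,0)})` (`α` in position `i`) together with all `a_{(ℓ,s)}` with `ℓ ≠ i`,
we have `π⁻¹(L) = W`. -/
theorem comap_piC_closure_const_eq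
    (D i : ℕ) (α : ℝ) (hi : 1 ≤ i) (hiD : i ≤ D) :
    Subgroup.comap piC
        (Subgroup.closure
          ({piC (wD fun j : Fin D => if (j : ℕ) + 1 = i then α else 0)} ∪
           {g : Cgrp | ∃ (ℓ : ℕ) (s : ℝ), ℓ ≠ i ∧ g = aC (ℓ, s)})) =
      Subgroup.closure
        {g : FreeGroup XT |
          ∃ r : Fin D → ℝ, (∀ j : Fin D, (j : ℕ) + 1 = i → r j = α) ∧ g = wD r} := by
  set r0 : Fin D → ℝ := fun j => if (j : ℕ) + 1 = i then α else 0 with hr0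
  set SW : Set (FreeGroup XT) :=
    {g | ∃ r : Fin D → ℝ, (∀ j : Fin D, (j : ℕ) + 1 = i → r j = α) ∧ g = wD r} with hSW
  set S : Set Cgrp :=
    {piC (wD r0)} ∪ {g : Cgrp | ∃ (ℓ : ℕ) (s : ℝ), ℓ ≠ i ∧ g = aC (ℓ, s)} with hS
  set W : Subgroup (FreeGroup XT) := Subgroup.closure SW with hW
  set SK : Set (FreeGroup BT) :=
    {g | ∃ (ℓ : ℕ) (s : ℝ), ℓ ≠ i ∧ g = FreeGroup.of (Sum.inl (ℓ, s))} with hSK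
  set K : Subgroup (FreeGroup BT) := Subgroup.closure SK with hK
  -- invariance of SW under the shifts with ℓ ≠ i
  have hshift : ∀ (ℓ : ℕ) (s : ℝ), ℓ ≠ i →
      (FreeGroup.freeGroupCongr (perm0 (Sum.inl (ℓ, s)))) '' SW = SW := by
    intro ℓ s hℓ
    apply Set.eq_of_subset_of_subset
    · rintro g ⟨g', ⟨r, hr, rfl⟩, rfl⟩
      refine ⟨fun j => if (j : ℕ) + 1 = ℓ then r j + s else r j, ?_, (shift_wD ℓ s r)⟩
      intro j hj
      have hne : (j : ℕ) + 1 ≠ ℓ := by rw [hj]; exact fun h => hℓ h.symm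
      simp only [hne, if_false]
      exact hr j hj
    · rintro g ⟨r, hr, rfl⟩
      refine ⟨wD (fun j => if (j : ℕ) + 1 = ℓ then r j - s else r j), ⟨_, ?_, rfl⟩, ?_⟩
      · intro j hj
        have hne : (j : ℕ) + 1 ≠ ℓ := by rw [hj]; exact fun h => hℓ h.symm
        simp only [hne, if_false]
        exact hr j hj
      · rw [shift_wD]
        congr 1
        funext j
        by_cases hj : (j : ℕ) + 1 = ℓ <;> simp [hj]
  -- W is invariant under phiA k for k ∈ K
  have hmap : ∀ k ∈ K, W.map (phiA k).toMonoidHom = W := by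
    intro k hk
    induction hk using Subgroup.closure_induction with
    | mem g hg =>
      obtain ⟨ℓ, s, hℓ, rfl⟩ := hg
      rw [MonoidHom.map_closure, phiA_of]
      rw [show ⇑(FreeGroup.freeGroupCongr (perm0 (Sum.inl (ℓ, s)))).toMonoidHom =
        ⇑(FreeGroup.freeGroupCongr (perm0 (Sum.inl (ℓ, s)))) from rfl]
      rw [hshift ℓ s hℓ]
    | one =>
      have h1 : (phiA (1 : FreeGroup BT)).toMonoidHom = MonoidHom.id (FreeGroup XT) := by
        ext x
        show phiA 1 (FreeGroup.of x) = FreeGroup.of x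
        simp
      rw [h1, Subgroup.map_id]
    | mul k₁ k₂ hk₁ hk₂ ih₁ ih₂ =>
      have h1 : (phiA (k₁ * k₂)).toMonoidHom =
          ((phiA k₁).toMonoidHom).comp ((phiA k₂).toMonoidHom) := by
        ext x
        show phiA (k₁ * k₂) (FreeGroup.of x) = phiA k₁ (phiA k₂ (FreeGroup.of x))
        rw [map_mul]
        rfl
      rw [h1, ← Subgroup.map_map, ih₂, ih₁]
    | inv k hk ih =>
      conv_lhs => rw [← ih]
      rw [Subgroup.map_map]
      have h1 : ((phiA k⁻¹).toMonoidHom).comp ((phiA k).toMonoidHom) = MonoidHom.id _ := by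
        ext x
        show (phiA k⁻¹) ((phiA k) (FreeGroup.of x)) = FreeGroup.of x
        rw [← MulAut.mul_apply, ← map_mul]
        simp
      rw [h1, Subgroup.map_id]
  have hKW : ∀ k ∈ K, ∀ n ∈ W, phiA k n ∈ W := by
    intro k hk n hn
    rw [← hmap k hk]
    exact ⟨n, hn, rfl⟩
  -- the subgroup P of HT
  set P : Subgroup HT :=
    { carrier := {h | h.left ∈ W ∧ h.right ∈ K}
      one_mem' := ⟨one_mem W, one_mem K⟩
      mul_mem' := by
        rintro a b ⟨ha1, ha2⟩ ⟨hb1, hb2⟩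
        refine ⟨?_, ?_⟩
        · rw [SemidirectProduct.mul_left]
          exact mul_mem ha1 (hKW _ ha2 _ hb1)
        · rw [SemidirectProduct.mul_right]
          exact mul_mem ha2 hb2
      inv_mem' := by
        rintro a ⟨ha1, ha2⟩
        refine ⟨?_, ?_⟩
        · rw [SemidirectProduct.inv_left]
          exact hKW _ (inv_mem ha2) _ (inv_mem ha1)
        · rw [SemidirectProduct.inv_right]
          exact inv_mem ha2 } with hP
  have hr0W : wD r0 ∈ SW := ⟨r0, fun j hj => by simp [hr0, hj], rfl⟩
  apply le_antisymm
  · -- hard direction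
    intro g hg
    have h1 : psiC (piC g) ∈ Subgroup.map psiC (Subgroup.closure S) :=
      Subgroup.mem_map_of_mem psiC hg
    rw [psiC_piC, MonoidHom.map_closure] at h1
    have h2 : Subgroup.closure (psiC '' S) ≤ P := by
      rw [Subgroup.closure_le]
      rintro h ⟨c, hc | ⟨ℓ, s, hℓ, rfl⟩, rfl⟩
      · rw [Set.mem_singleton_iff] at hc
        subst hc
        rw [psiC_piC]
        refine ⟨?_, ?_⟩
        · simpa using Subgroup.subset_closure hr0W
        · show (1 : FreeGroup BT) ∈ K
          exact one_mem K
      · have heq : psiC (aC (ℓ, s)) = SemidirectProduct.inr (FreeGroup.of (Sum.inl (ℓ, s))) := by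
          simp [psiC, aC, fgen]
        rw [heq]
        refine ⟨?_, ?_⟩
        · show (1 : FreeGroup XT) ∈ W
          exact one_mem W
        · have : FreeGroup.of (Sum.inl (ℓ, s)) ∈ SK := ⟨ℓ, s, hℓ, rfl⟩
          simpa using Subgroup.subset_closure this
    have h3 := h2 h1
    exact h3.1
  · -- easy direction
    rw [Subgroup.closure_le]
    rintro g ⟨r, hr, rfl⟩
    show piC (wD r) ∈ Subgroup.closure S
    have key : ∀ F : Finset (Fin D),
        piC (wD (fun j => if j ∈ F then r j else r0 j)) ∈ Subgroup.closure S := by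
      intro F
      refine Finset.induction_on F ?_ ?_
      · simp only [Finset.notMem_empty, if_false]
        exact Subgroup.subset_closure (Or.inl rfl)
      · intro j0 F hj0 ih
        by_cases hcase : (j0 : ℕ) + 1 = i
        · have : (fun j => if j ∈ insert j0 F then r j else r0 j) =
              (fun j => if j ∈ F then r j else r0 j) := by
            funext j
            by_cases hj : j = j0
            · subst hj
              simp [hj0, hr _ hcase, hr0, hcase]
            · simp [Finset.mem_insert, hj]
          rw [this]; exact ih
        · have heq : piC (wD (fun j => if j ∈ insert j0 F then r j else r0 j)) =
              aC (j0.1 + 1, r j0) * piC (wD (fun j => if j ∈ F then r j else r0 j)) *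
                (aC (j0.1 + 1, r j0))⁻¹ := by
            rw [aC_conj_word, shift_wD]
            congr 2
            funext j
            by_cases hj : j = j0
            · subst hj
              simp [hj0, hr0, hcase]
            · have : ¬ ((j : ℕ) + 1 = (j0 : ℕ) + 1) := by
                simp only [add_left_inj]
                exact fun h => hj (Fin.ext h)
              simp [this, Finset.mem_insert, hj, Fin.val_inj]
          rw [heq]
          refine mul_mem (mul_mem (Subgroup.subset_closure (Or.inr ⟨j0.1 + 1, r j0, hcase, rfl⟩)) ih)
            (inv_mem (Subgroup.subset_closure (Or.inr ⟨j0.1 + 1, r j0, hcase, rfl⟩)))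
    have := key Finset.univ
    simpa using this
end

section
/- Fix natural numbers D, i, j with 1 ≤ j < i ≤ D. Let W be the subgroup of FreeGroup(X) generated by {w_r : r ∈ ℝ^D, r_i = r_j}, and let L be the subgroup of C generated by π(w_{(0,…,0)}) together with the images in C of the products a_{(i,s)} · a_{(j,s)} for all s ∈ ℝ and the images of all generators a_{(ℓ,s)} with s ∈ ℝ and ℓ ∈ ℕ, ℓ ∉ {i, j}. Then the preimage of L under π (Subgroup.comap π L) equals W. -/
/- ===== auxiliary setup ===== -/

abbrev QGen : Type := (ℕ × ℝ) ⊕ (ℕ × {t : ℝ // t ≠ 0})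
abbrev QG : Type := FreeGroup QGen

noncomputable def sigA (p : ℕ × ℝ) : XT ≃ XT where
  toFun g := Sum.elim (fun q => Sum.inl (q.1, if q.1 = p.1 then q.2 + p.2 else q.2)) Sum.inr g
  invFun g := Sum.elim (fun q => Sum.inl (q.1, if q.1 = p.1 then q.2 - p.2 else q.2)) Sum.inr g
  left_inv g := by rcases g with ⟨k, s⟩ | u <;> simp only [Sum.elim_inl, Sum.elim_inr]
                   split <;> simp_all
  right_inv g := by rcases g with ⟨k, s⟩ | u <;> simp only [Sum.elim_inl, Sum.elim_inr]
                    split <;> simp_all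

noncomputable def sigM (q : ℕ × {t : ℝ // t ≠ 0}) : XT ≃ XT where
  toFun g := Sum.elim (fun p => Sum.inl (p.1, if p.1 = q.1 then p.2 * q.2.1 else p.2)) Sum.inr g
  invFun g := Sum.elim (fun p => Sum.inl (p.1, if p.1 = q.1 then p.2 / q.2.1 else p.2)) Sum.inr g
  left_inv g := by rcases g with ⟨k, s⟩ | u <;> simp only [Sum.elim_inl, Sum.elim_inr]
                   split <;> simp_all [mul_div_cancel_right₀ _ q.2.2]
  right_inv g := by rcases g with ⟨k, s⟩ | u <;> simp only [Sum.elim_inl, Sum.elim_inr]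
                    split <;> simp_all [div_mul_cancel₀ _ q.2.2]

@[simp] lemma sigA_inl (p q : ℕ × ℝ) :
    sigA p (Sum.inl q) = Sum.inl (q.1, if q.1 = p.1 then q.2 + p.2 else q.2) := rfl
@[simp] lemma sigA_inr (p : ℕ × ℝ) (u : Unit) : sigA p (Sum.inr u) = Sum.inr u := rfl
@[simp] lemma sigA_symm_inl (p q : ℕ × ℝ) :
    (sigA p).symm (Sum.inl q) = Sum.inl (q.1, if q.1 = p.1 then q.2 - p.2 else q.2) := rfl
@[simp] lemma sigA_symm_inr (p : ℕ × ℝ) (u : Unit) : (sigA p).symm (Sum.inr u) = Sum.inr u := rfl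
@[simp] lemma sigM_inl (q : ℕ × {t : ℝ // t ≠ 0}) (p : ℕ × ℝ) :
    sigM q (Sum.inl p) = Sum.inl (p.1, if p.1 = q.1 then p.2 * q.2.1 else p.2) := rfl
@[simp] lemma sigM_inr (q : ℕ × {t : ℝ // t ≠ 0}) (u : Unit) : sigM q (Sum.inr u) = Sum.inr u := rfl

noncomputable def phiQ : QG →* MulAut (FreeGroup XT) :=
  FreeGroup.lift fun g =>
    Sum.elim (fun p => (FreeGroup.freeGroupCongr (sigA p) : MulAut (FreeGroup XT)))
      (fun q => (FreeGroup.freeGroupCongr (sigM q) : MulAut (FreeGroup XT))) g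

def aQ (p : ℕ × ℝ) : QG := FreeGroup.of (Sum.inl p)

@[simp] lemma phiQ_ofA (p : ℕ × ℝ) :
    phiQ (FreeGroup.of (Sum.inl p)) = FreeGroup.freeGroupCongr (sigA p) := by
  simp [phiQ]

lemma phiQ_aQ (p : ℕ × ℝ) : phiQ (aQ p) = FreeGroup.freeGroupCongr (sigA p) := phiQ_ofA p

@[simp] lemma phiQ_mQ (q : ℕ × {t : ℝ // t ≠ 0}) :
    phiQ (FreeGroup.of (Sum.inr q)) = FreeGroup.freeGroupCongr (sigM q) := by
  simp [phiQ]

abbrev SDg : Type := SemidirectProduct (FreeGroup XT) QG phiQ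

noncomputable def fGen : GenC → SDg := fun g =>
  Sum.elim (fun x => SemidirectProduct.inl (FreeGroup.of x))
    (fun q => SemidirectProduct.inr (FreeGroup.of q)) g


lemma inr_inl_rel {N G : Type*} [Group N] [Group G] {phi : G →* MulAut N} (g : G) (n m : N)
    (h : phi g n = m) :
    SemidirectProduct.inr g * SemidirectProduct.inl n * (SemidirectProduct.inr (φ := phi) g)⁻¹ *
      (SemidirectProduct.inl m)⁻¹ = 1 := by
  subst h
  rw [← map_inv SemidirectProduct.inr, ← SemidirectProduct.inl_aut]
  simp

lemma fGen_rels : ∀ r ∈ relsC, FreeGroup.lift fGen r = 1 := by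
  intro r hr
  rcases hr with ((((hr | hr) | hr) | hr) | hr) | hr
  · obtain ⟨i, s, t, rfl⟩ := hr
    simp only [xc, ac, map_mul, map_inv, FreeGroup.lift_apply_of, fGen, Sum.elim_inl, Sum.elim_inr]
    exact inr_inl_rel _ _ _ (by simp)
  · obtain ⟨i, j, s, t, hji, rfl⟩ := hr
    simp only [xc, ac, map_mul, map_inv, FreeGroup.lift_apply_of, fGen, Sum.elim_inl, Sum.elim_inr]
    exact inr_inl_rel _ _ _ (by simp [hji])
  · obtain ⟨i, t, rfl⟩ := hr
    simp only [yc, ac, map_mul, map_inv, FreeGroup.lift_apply_of, fGen, Sum.elim_inl, Sum.elim_inr]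
    exact inr_inl_rel _ _ _ (by simp)
  · obtain ⟨i, s, t, rfl⟩ := hr
    simp only [xc, mcg, map_mul, map_inv, FreeGroup.lift_apply_of, fGen, Sum.elim_inl, Sum.elim_inr]
    exact inr_inl_rel _ _ _ (by simp)
  · obtain ⟨i, j, s, t, hji, rfl⟩ := hr
    simp only [xc, mcg, map_mul, map_inv, FreeGroup.lift_apply_of, fGen, Sum.elim_inl, Sum.elim_inr]
    exact inr_inl_rel _ _ _ (by simp [hji])
  · obtain ⟨i, t, rfl⟩ := hr
    simp only [yc, mcg, map_mul, map_inv, FreeGroup.lift_apply_of, fGen, Sum.elim_inl, Sum.elim_inr]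
    exact inr_inl_rel _ _ _ (by simp)

noncomputable def rhoC : Cgrp →* SDg := PresentedGroup.toGroup fGen_rels

lemma rhoC_piC_of (x : XT) :
    rhoC (piC (FreeGroup.of x)) = SemidirectProduct.inl (FreeGroup.of x) := by
  rw [piC, FreeGroup.lift_apply_of]
  exact PresentedGroup.toGroup.of fGen_rels

@[simp] lemma rhoC_piC (f : FreeGroup XT) : rhoC (piC f) = SemidirectProduct.inl f := by
  have h : rhoC.comp piC = (SemidirectProduct.inl : FreeGroup XT →* SDg) :=
    FreeGroup.ext_hom _ _ fun x => by simpa using rhoC_piC_of x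
  exact DFunLike.congr_fun h f

@[simp] lemma rhoC_aC (p : ℕ × ℝ) : rhoC (aC p) = SemidirectProduct.inr (aQ p) :=
  PresentedGroup.toGroup.of fGen_rels

/- ===== conjugation and shift lemmas ===== -/

lemma congr_cD {D : ℕ} (e : XT ≃ XT) (σ : ℕ → ℝ → ℝ)
    (h : ∀ k s, e (Sum.inl (k, s)) = Sum.inl (k, σ k s)) (r : Fin D → ℝ) :
    FreeGroup.freeGroupCongr e (cD r) = cD fun p => σ ((p : ℕ) + 1) (r p) := by
  unfold cD
  rw [map_list_prod, List.map_ofFn]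
  refine congrArg List.prod (congrArg List.ofFn (funext fun p => ?_))
  simp only [Function.comp, xX, FreeGroup.freeGroupCongr_apply, FreeGroup.map.of, h]

lemma congr_wD {D : ℕ} (e : XT ≃ XT) (σ : ℕ → ℝ → ℝ)
    (h : ∀ k s, e (Sum.inl (k, s)) = Sum.inl (k, σ k s))
    (hy : e (Sum.inr ()) = Sum.inr ()) (r : Fin D → ℝ) :
    FreeGroup.freeGroupCongr e (wD r) = wD fun p => σ ((p : ℕ) + 1) (r p) := by
  unfold wD
  rw [map_mul, map_mul, map_inv, congr_cD e σ h r]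
  congr 2
  simp only [yX, FreeGroup.freeGroupCongr_apply, FreeGroup.map.of, hy]

lemma shiftA_wD {D : ℕ} (ℓ : ℕ) (t : ℝ) (r : Fin D → ℝ) :
    FreeGroup.freeGroupCongr (sigA (ℓ, t)) (wD r) =
      wD fun p => if (p : ℕ) + 1 = ℓ then r p + t else r p :=
  congr_wD _ (fun k s => if k = ℓ then s + t else s) (fun _ _ => rfl) rfl r

lemma shiftAinv_wD {D : ℕ} (ℓ : ℕ) (t : ℝ) (r : Fin D → ℝ) :
    FreeGroup.freeGroupCongr (sigA (ℓ, t)).symm (wD r) =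
      wD fun p => if (p : ℕ) + 1 = ℓ then r p - t else r p :=
  congr_wD _ (fun k s => if k = ℓ then s - t else s) (fun _ _ => rfl) rfl r

lemma phiQ_aQ_inv (p : ℕ × ℝ) :
    phiQ (aQ p)⁻¹ = FreeGroup.freeGroupCongr ((sigA p).symm) := by
  rw [map_inv, phiQ_aQ]
  rfl

/- C-side conjugation -/

lemma piC_xX (p : ℕ × ℝ) : piC (xX p) = PresentedGroup.mk relsC (xc p) := by
  simp only [piC, xX, FreeGroup.lift_apply_of]
  rfl

lemma piC_rel_x (ℓ k : ℕ) (t s : ℝ) :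
    aC (ℓ, t) * piC (xX (k, s)) * (aC (ℓ, t))⁻¹ =
      piC (xX (k, if k = ℓ then s + t else s)) := by
  have key : PresentedGroup.mk relsC
      (ac (ℓ, t) * xc (k, s) * (ac (ℓ, t))⁻¹ * (xc (k, if k = ℓ then s + t else s))⁻¹) = 1 := by
    refine (QuotientGroup.eq_one_iff _).2 (Subgroup.subset_normalClosure ?_)
    by_cases hk : k = ℓ
    · subst hk
      rw [if_pos rfl]
      exact Or.inl (Or.inl (Or.inl (Or.inl (Or.inl ⟨k, s, t, rfl⟩))))
    · rw [if_neg hk]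
      exact Or.inl (Or.inl (Or.inl (Or.inl (Or.inr ⟨ℓ, k, s, t, hk, rfl⟩))))
  rw [map_mul, map_mul, map_inv, map_inv] at key
  rw [piC_xX, piC_xX]
  exact mul_inv_eq_one.mp key

lemma piC_yX : piC yX = PresentedGroup.mk relsC yc := by
  simp only [piC, yX, FreeGroup.lift_apply_of]
  rfl

lemma piC_rel_y (p : ℕ × ℝ) : aC p * piC yX * (aC p)⁻¹ = piC yX := by
  have key : PresentedGroup.mk relsC (ac p * yc * (ac p)⁻¹ * yc⁻¹) = 1 := by
    refine (QuotientGroup.eq_one_iff _).2 (Subgroup.subset_normalClosure ?_)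
    exact Or.inl (Or.inl (Or.inl (Or.inr ⟨p.1, p.2, rfl⟩)))
  rw [map_mul, map_mul, map_inv, map_inv] at key
  rw [piC_yX]
  exact mul_inv_eq_one.mp key

lemma conj_list_prod {G : Type*} [Group G] (u : G) (l : List G) :
    u * l.prod * u⁻¹ = (l.map fun x => u * x * u⁻¹).prod := by
  induction l with
  | nil => simp
  | cons a l ih =>
    simp only [List.prod_cons, List.map_cons]
    rw [← ih]
    group

lemma conj_cD {D : ℕ} (u : Cgrp) (σ : ℕ → ℝ → ℝ)
    (h : ∀ k s, u * piC (xX (k, s)) * u⁻¹ = piC (xX (k, σ k s))) (r : Fin D → ℝ) :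
    u * piC (cD r) * u⁻¹ = piC (cD fun p => σ ((p : ℕ) + 1) (r p)) := by
  unfold cD
  rw [map_list_prod, conj_list_prod, map_list_prod, List.map_ofFn, List.map_ofFn, List.map_ofFn]
  refine congrArg List.prod (congrArg List.ofFn (funext fun p => ?_))
  exact h _ _

lemma conj_wD {D : ℕ} (u : Cgrp) (σ : ℕ → ℝ → ℝ)
    (h : ∀ k s, u * piC (xX (k, s)) * u⁻¹ = piC (xX (k, σ k s)))
    (hy : u * piC yX * u⁻¹ = piC yX) (r : Fin D → ℝ) :
    u * piC (wD r) * u⁻¹ = piC (wD fun p => σ ((p : ℕ) + 1) (r p)) := by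
  unfold wD
  simp only [map_mul, map_inv]
  calc u * ((piC (cD r))⁻¹ * piC yX * piC (cD r)) * u⁻¹
      = (u * piC (cD r) * u⁻¹)⁻¹ * (u * piC yX * u⁻¹) * (u * piC (cD r) * u⁻¹) := by group
    _ = _ := by rw [conj_cD u σ h r, hy]

lemma conj_aC_wD {D : ℕ} (ℓ : ℕ) (t : ℝ) (r : Fin D → ℝ) :
    aC (ℓ, t) * piC (wD r) * (aC (ℓ, t))⁻¹ =
      piC (wD fun p => if (p : ℕ) + 1 = ℓ then r p + t else r p) :=
  conj_wD (aC (ℓ, t)) (fun k s => if k = ℓ then s + t else s)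
    (fun k s => piC_rel_x ℓ k t s) (piC_rel_y (ℓ, t)) r

/- ===== the subgroups W, Q' and stability ===== -/

def WSet (D i j : ℕ) : Set (FreeGroup XT) :=
  {g : FreeGroup XT |
    ∃ r : Fin D → ℝ,
      (∀ p q : Fin D, (p : ℕ) + 1 = i → (q : ℕ) + 1 = j → r p = r q) ∧ g = wD r}

def QSet (i j : ℕ) : Set QG :=
  {q : QG | ∃ s : ℝ, q = aQ (i, s) * aQ (j, s)} ∪
  {q : QG | ∃ (ℓ : ℕ) (s : ℝ), ℓ ≠ i ∧ ℓ ≠ j ∧ q = aQ (ℓ, s)}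

lemma mapW_le {D i j : ℕ} (u : MulAut (FreeGroup XT))
    (h : ∀ g ∈ WSet D i j, u g ∈ WSet D i j) :
    ∀ f ∈ Subgroup.closure (WSet D i j), u f ∈ Subgroup.closure (WSet D i j) := by
  intro f hf
  have h2 : (Subgroup.closure (WSet D i j)).map u.toMonoidHom ≤
      Subgroup.closure (WSet D i j) := by
    rw [MonoidHom.map_closure]
    exact Subgroup.closure_mono (Set.image_subset_iff.mpr h)
  exact h2 ⟨f, hf, rfl⟩

lemma stab_single {D i j ℓ : ℕ} (h1 : ℓ ≠ i) (h2 : ℓ ≠ j) (s : ℝ) :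
    ∀ g ∈ WSet D i j, FreeGroup.freeGroupCongr (sigA (ℓ, s)) g ∈ WSet D i j := by
  rintro g ⟨r, hcon, rfl⟩
  refine ⟨_, ?_, shiftA_wD ℓ s r⟩
  intro p q hp hq
  rw [if_neg (by omega), if_neg (by omega)]
  exact hcon p q hp hq

lemma stab_single_inv {D i j ℓ : ℕ} (h1 : ℓ ≠ i) (h2 : ℓ ≠ j) (s : ℝ) :
    ∀ g ∈ WSet D i j, FreeGroup.freeGroupCongr (sigA (ℓ, s)).symm g ∈ WSet D i j := by
  rintro g ⟨r, hcon, rfl⟩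
  refine ⟨_, ?_, shiftAinv_wD ℓ s r⟩
  intro p q hp hq
  rw [if_neg (by omega), if_neg (by omega)]
  exact hcon p q hp hq

lemma stab_pair {D i j : ℕ} (hij : i ≠ j) (s : ℝ) :
    ∀ g ∈ WSet D i j,
      FreeGroup.freeGroupCongr (sigA (i, s))
        (FreeGroup.freeGroupCongr (sigA (j, s)) g) ∈ WSet D i j := by
  rintro g ⟨r, hcon, rfl⟩
  refine ⟨fun p => if (p : ℕ) + 1 = i then (if (p : ℕ) + 1 = j then r p + s else r p) + s
      else if (p : ℕ) + 1 = j then r p + s else r p, ?_, by simp only [shiftA_wD]⟩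
  intro p q hp hq
  beta_reduce
  rw [if_pos hp, if_neg (by omega), if_neg (by omega), if_pos hq, hcon p q hp hq]

lemma stab_pair_inv {D i j : ℕ} (hij : i ≠ j) (s : ℝ) :
    ∀ g ∈ WSet D i j,
      FreeGroup.freeGroupCongr (sigA (j, s)).symm
        (FreeGroup.freeGroupCongr (sigA (i, s)).symm g) ∈ WSet D i j := by
  rintro g ⟨r, hcon, rfl⟩
  refine ⟨fun p => if (p : ℕ) + 1 = j then (if (p : ℕ) + 1 = i then r p - s else r p) - s
      else if (p : ℕ) + 1 = i then r p - s else r p, ?_, by simp only [shiftAinv_wD]⟩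
  intro p q hp hq
  beta_reduce
  rw [if_neg (by omega), if_pos hp, if_pos hq, if_neg (by omega), hcon p q hp hq]

lemma stabQ {D i j : ℕ} (hij : i ≠ j) :
    ∀ q ∈ Subgroup.closure (QSet i j), ∀ f ∈ Subgroup.closure (WSet D i j),
      phiQ q f ∈ Subgroup.closure (WSet D i j) := by
  intro q hq
  refine (Subgroup.closure_induction
    (p := fun q _ =>
      (∀ f ∈ Subgroup.closure (WSet D i j), phiQ q f ∈ Subgroup.closure (WSet D i j)) ∧
      (∀ f ∈ Subgroup.closure (WSet D i j), phiQ q⁻¹ f ∈ Subgroup.closure (WSet D i j)))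
    ?_ ?_ ?_ ?_ hq).1
  · rintro x (⟨s, rfl⟩ | ⟨ℓ, s, h1, h2, rfl⟩)
    · constructor
      · refine mapW_le _ (fun g hg => ?_)
        rw [map_mul, MulAut.mul_apply, phiQ_aQ, phiQ_aQ]
        exact stab_pair hij s g hg
      · refine mapW_le _ (fun g hg => ?_)
        rw [mul_inv_rev, map_mul, MulAut.mul_apply, phiQ_aQ_inv, phiQ_aQ_inv]
        exact stab_pair_inv hij s g hg
    · constructor
      · refine mapW_le _ (fun g hg => ?_)
        rw [phiQ_aQ]
        exact stab_single h1 h2 s g hg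
      · refine mapW_le _ (fun g hg => ?_)
        rw [phiQ_aQ_inv]
        exact stab_single_inv h1 h2 s g hg
  · constructor <;> intro f hf <;> simpa using hf
  · intro x y _ _ px py
    constructor
    · intro f hf
      have h : phiQ (x * y) f = phiQ x (phiQ y f) := by rw [map_mul]; rfl
      rw [h]
      exact px.1 _ (py.1 f hf)
    · intro f hf
      have h : phiQ ((x * y)⁻¹) f = phiQ y⁻¹ (phiQ x⁻¹ f) := by
        rw [mul_inv_rev, map_mul]; rfl
      rw [h]
      exact py.2 _ (px.2 f hf)
  · intro x _ px
    exact ⟨px.2, by simpa using px.1⟩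

/-- The subgroup of the semidirect product used to detect membership. -/
noncomputable def Msub (Wsub : Subgroup (FreeGroup XT)) (Qs : Subgroup QG)
    (hstab : ∀ q ∈ Qs, ∀ f ∈ Wsub, phiQ q f ∈ Wsub) : Subgroup SDg where
  carrier := {g | g.left ∈ Wsub ∧ g.right ∈ Qs}
  one_mem' := ⟨by rw [SemidirectProduct.one_left]; exact one_mem _,
    by rw [SemidirectProduct.one_right]; exact one_mem _⟩
  mul_mem' := fun {a b} ha hb =>
    ⟨by rw [SemidirectProduct.mul_left]; exact mul_mem ha.1 (hstab _ ha.2 _ hb.1),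
     by rw [SemidirectProduct.mul_right]; exact mul_mem ha.2 hb.2⟩
  inv_mem' := fun {a} ha =>
    ⟨by rw [SemidirectProduct.inv_left]; exact hstab _ (inv_mem ha.2) _ (inv_mem ha.1),
     by rw [SemidirectProduct.inv_right]; exact inv_mem ha.2⟩

/-- For the assignment `x_i ← x_j` (`1 ≤ j < i ≤ D`): with `W` the subgroup of
`FreeGroup X` generated by `{w_r : r ∈ ℝ^D, r_i = r_j}` and `L` the subgroup of `C`
generated by `π(w_{(0,…,0)})` together with the products `a_{(i,s)}·a_{(j,s)}` for
`s ∈ ℝ` and all `a_{(ℓ,s)}` with `ℓ ∉ {i, j}`, we have `π⁻¹(L) = W`. -/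
theorem comap_piC_closure_copy_eq
    (D i j : ℕ) (hj : 1 ≤ j) (hji : j < i) (hiD : i ≤ D) :
    Subgroup.comap piC
        (Subgroup.closure
          ({piC (wD fun _ : Fin D => (0 : ℝ))} ∪
           {g : Cgrp | ∃ s : ℝ, g = aC (i, s) * aC (j, s)} ∪
           {g : Cgrp | ∃ (ℓ : ℕ) (s : ℝ), ℓ ≠ i ∧ ℓ ≠ j ∧ g = aC (ℓ, s)})) =
      Subgroup.closure
        {g : FreeGroup XT |
          ∃ r : Fin D → ℝ,
            (∀ p q : Fin D, (p : ℕ) + 1 = i → (q : ℕ) + 1 = j → r p = r q) ∧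
              g = wD r} := by
  have hij : i ≠ j := by omega
  apply le_antisymm
  · -- hard direction: comap ≤ W
    intro f hf
    rw [Subgroup.mem_comap] at hf
    have h1 : rhoC (piC f) ∈ (Subgroup.closure
        ({piC (wD fun _ : Fin D => (0 : ℝ))} ∪
           {g : Cgrp | ∃ s : ℝ, g = aC (i, s) * aC (j, s)} ∪
           {g : Cgrp | ∃ (ℓ : ℕ) (s : ℝ), ℓ ≠ i ∧ ℓ ≠ j ∧ g = aC (ℓ, s)})).map rhoC :=
      ⟨piC f, hf, rfl⟩
    rw [MonoidHom.map_closure] at h1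
    have h2 : Subgroup.closure (rhoC ''
        ({piC (wD fun _ : Fin D => (0 : ℝ))} ∪
           {g : Cgrp | ∃ s : ℝ, g = aC (i, s) * aC (j, s)} ∪
           {g : Cgrp | ∃ (ℓ : ℕ) (s : ℝ), ℓ ≠ i ∧ ℓ ≠ j ∧ g = aC (ℓ, s)})) ≤
        Msub (Subgroup.closure (WSet D i j)) (Subgroup.closure (QSet i j)) (stabQ hij) := by
      rw [Subgroup.closure_le]
      rintro g ⟨c, hc, rfl⟩
      simp only [Set.mem_union, Set.mem_singleton_iff, Set.mem_setOf_eq] at hc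
      rcases hc with (rfl | ⟨s, rfl⟩) | ⟨ℓ, s, hh1, hh2, rfl⟩
      · rw [rhoC_piC]
        refine ⟨?_, ?_⟩
        · rw [SemidirectProduct.left_inl]
          exact Subgroup.subset_closure ⟨fun _ => 0, fun _ _ _ _ => rfl, rfl⟩
        · rw [SemidirectProduct.right_inl]
          exact one_mem _
      · rw [map_mul, rhoC_aC, rhoC_aC, ← map_mul]
        refine ⟨?_, ?_⟩
        · rw [SemidirectProduct.left_inr]
          exact one_mem _
        · rw [SemidirectProduct.right_inr]
          exact Subgroup.subset_closure (Or.inl ⟨s, rfl⟩)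
      · rw [rhoC_aC]
        refine ⟨?_, ?_⟩
        · rw [SemidirectProduct.left_inr]
          exact one_mem _
        · rw [SemidirectProduct.right_inr]
          exact Subgroup.subset_closure (Or.inr ⟨ℓ, s, hh1, hh2, rfl⟩)
    have h3 := h2 h1
    rw [rhoC_piC] at h3
    have h4 := h3.1
    rw [SemidirectProduct.left_inl] at h4
    exact h4
  · -- easy direction: W ≤ comap
    rw [Subgroup.closure_le]
    rintro g ⟨r, hcon, rfl⟩
    simp only [SetLike.mem_coe, Subgroup.mem_comap]
    set L := Subgroup.closure
        ({piC (wD fun _ : Fin D => (0 : ℝ))} ∪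
           {g : Cgrp | ∃ s : ℝ, g = aC (i, s) * aC (j, s)} ∪
           {g : Cgrp | ∃ (ℓ : ℕ) (s : ℝ), ℓ ≠ i ∧ ℓ ≠ j ∧ g = aC (ℓ, s)}) with hL
    have hw0 : piC (wD fun _ : Fin D => (0 : ℝ)) ∈ L :=
      Subgroup.subset_closure (Or.inl (Or.inl rfl))
    have hpair : ∀ s : ℝ, aC (i, s) * aC (j, s) ∈ L := fun s =>
      Subgroup.subset_closure (Or.inl (Or.inr ⟨s, rfl⟩))
    have hsingle : ∀ ℓ s, ℓ ≠ i → ℓ ≠ j → aC (ℓ, s) ∈ L := fun ℓ s h1 h2 =>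
      Subgroup.subset_closure (Or.inr ⟨ℓ, s, h1, h2, rfl⟩)
    have hjD : j - 1 < D := by omega
    have hpjv : ((⟨j - 1, hjD⟩ : Fin D) : ℕ) + 1 = j := by simp; omega
    have step : ∀ k : ℕ,
        piC (wD fun p : Fin D =>
          if (p : ℕ) + 1 = i ∨ (p : ℕ) + 1 = j ∨ (p : ℕ) + 1 ≤ k then r p else 0) ∈ L := by
      intro k
      induction k with
      | zero =>
        have hmem := mul_mem (mul_mem (hpair (r ⟨j - 1, hjD⟩)) hw0)
          (inv_mem (hpair (r ⟨j - 1, hjD⟩)))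
        rw [show (aC (i, r ⟨j - 1, hjD⟩) * aC (j, r ⟨j - 1, hjD⟩)) *
              piC (wD fun _ : Fin D => (0 : ℝ)) *
              (aC (i, r ⟨j - 1, hjD⟩) * aC (j, r ⟨j - 1, hjD⟩))⁻¹ =
            aC (i, r ⟨j - 1, hjD⟩) *
              (aC (j, r ⟨j - 1, hjD⟩) * piC (wD fun _ : Fin D => (0 : ℝ)) *
                (aC (j, r ⟨j - 1, hjD⟩))⁻¹) * (aC (i, r ⟨j - 1, hjD⟩))⁻¹ from by group] at hmem
        simp only [conj_aC_wD] at hmem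
        have hfun : (fun p : Fin D =>
              if (p : ℕ) + 1 = i then
                (if (p : ℕ) + 1 = j then (0 : ℝ) + r ⟨j - 1, hjD⟩ else 0) + r ⟨j - 1, hjD⟩
              else if (p : ℕ) + 1 = j then (0 : ℝ) + r ⟨j - 1, hjD⟩ else 0) =
            fun p : Fin D =>
              if (p : ℕ) + 1 = i ∨ (p : ℕ) + 1 = j ∨ (p : ℕ) + 1 ≤ 0 then r p else 0 := by
          funext p
          by_cases hp1 : (p : ℕ) + 1 = i
          · rw [if_pos hp1, if_neg (by omega), if_pos (Or.inl hp1), zero_add]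
            exact (hcon p ⟨j - 1, hjD⟩ hp1 hpjv).symm
          · by_cases hp2 : (p : ℕ) + 1 = j
            · have hpp : p = ⟨j - 1, hjD⟩ := Fin.ext (by simp; omega)
              rw [if_neg hp1, if_pos hp2, if_pos (Or.inr (Or.inl hp2)), zero_add, hpp]
            · rw [if_neg hp1, if_neg hp2, if_neg (by omega)]
        rw [hfun] at hmem
        exact hmem
      | succ k ih =>
        by_cases hk : k + 1 = i ∨ k + 1 = j ∨ D < k + 1
        · have hfun : (fun p : Fin D =>
                if (p : ℕ) + 1 = i ∨ (p : ℕ) + 1 = j ∨ (p : ℕ) + 1 ≤ k + 1 then r p else 0) =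
              fun p : Fin D =>
                if (p : ℕ) + 1 = i ∨ (p : ℕ) + 1 = j ∨ (p : ℕ) + 1 ≤ k then r p else 0 := by
            funext p
            have hlt := p.isLt
            exact if_congr (by omega) rfl rfl
          rw [hfun]
          exact ih
        · push_neg at hk
          obtain ⟨hk1, hk2, hk3⟩ := hk
          have hklt : k < D := by omega
          have hmem := mul_mem (mul_mem (hsingle (k + 1) (r ⟨k, hklt⟩) hk1 hk2) ih)
            (inv_mem (hsingle (k + 1) (r ⟨k, hklt⟩) hk1 hk2))
          simp only [conj_aC_wD] at hmem
          have hfun : (fun p : Fin D =>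
                if (p : ℕ) + 1 = k + 1 then
                  (if (p : ℕ) + 1 = i ∨ (p : ℕ) + 1 = j ∨ (p : ℕ) + 1 ≤ k then r p else 0) +
                    r ⟨k, hklt⟩
                else if (p : ℕ) + 1 = i ∨ (p : ℕ) + 1 = j ∨ (p : ℕ) + 1 ≤ k then r p else 0) =
              fun p : Fin D =>
                if (p : ℕ) + 1 = i ∨ (p : ℕ) + 1 = j ∨ (p : ℕ) + 1 ≤ k + 1 then r p else 0 := by
            funext p
            by_cases hp : (p : ℕ) + 1 = k + 1
            · have hpp : p = ⟨k, hklt⟩ := Fin.ext (by simp; omega)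
              rw [if_pos hp, if_neg (by omega), if_pos (by omega), hpp]
              simp
            · have hlt := p.isLt
              rw [if_neg hp]
              exact if_congr (by omega) rfl rfl
          rw [hfun] at hmem
          exact hmem
    have hfin := step D
    rw [show (fun p : Fin D =>
          if (p : ℕ) + 1 = i ∨ (p : ℕ) + 1 = j ∨ (p : ℕ) + 1 ≤ D then r p else 0) = r from
        funext fun p => if_pos (Or.inr (Or.inr p.isLt))] at hfin
    exact hfin
end
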